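/- arXiv:1205.5763 — 4 statements merged into one kernel-verified Lean document; each statement's English description precedes it below -/
import Mathlib

section
/- Let I ⊆ ℝ be an interval of length 1, L ≥ 1 an integer, x ∈ 𝒵, and let N = |B_L(x)| and λ_1(ω),…,λ_N(ω) be the eigenvalues of H_{B_L(x)}(ω). Let a, b, c, P_L > 0 satisfy b ≤ min{N^{−1}·a·c², c}, and suppose that ℙ(M_x(E) ≥ a) ≤ P_L for every E ∈ I. Then there is a measurable event 𝓑 with ℙ(𝓑) ≤ b^{−1}·P_L such that for every ω ∉ 𝓑 the set {E ∈ I : M_x(E;ω) ≥ 2a} is contained in ∪_{j=1}^{N} {E ∈ ℝ : |E − λ_j(ω)| ≤ c}. -/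
/-!
Statement 6: the "singular width" theorem (Theorem `sing.width` in the paper): outside an
event of probability `b⁻¹ P_L`, the energies where the Green function from the centre to the
boundary of `B_L(x)` is large are confined to `c`-neighbourhoods of the eigenvalues.
-/

open Finset

section Defs

variable {Z : Type*}

/-- The ball `B_r(x) = {y : d(x,y) ≤ r}` of the graph metric, as a `Finset`
(using the finiteness of balls `hfin`). -/
noncomputable def zball (G : SimpleGraph Z)
    (hfin : ∀ (x : Z) (r : ℕ), {y : Z | G.dist x y ≤ r}.Finite)
    (x : Z) (r : ℕ) : Finset Z := (hfin x r).toFinset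

lemma self_mem_zball (G : SimpleGraph Z)
    (hfin : ∀ (x : Z) (r : ℕ), {y : Z | G.dist x y ≤ r}.Finite)
    (x : Z) (r : ℕ) : x ∈ zball G hfin x r := by
  simp [zball, Set.Finite.mem_toFinset, SimpleGraph.dist_self]

/-- The discrete Schrödinger operator `H_Λ = -Δ^D_Λ + V` (Dirichlet restriction to `Λ`,
with `n(x)` the number of neighbours of `x` in the whole graph), as a matrix. -/
noncomputable def Ham [DecidableEq Z] (G : SimpleGraph Z) [DecidableRel G.Adj]
    [∀ v : Z, Fintype (G.neighborSet v)]
    (V : Z → ℝ) (Λ : Finset Z) : Matrix Λ Λ ℝ := fun x y =>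
  (if (x : Z) = (y : Z) then (G.degree (x : Z) : ℝ) + V (x : Z) else 0) -
    (if G.Adj (x : Z) (y : Z) then 1 else 0)

/-- The spectrum (set of eigenvalues) of a finite-dimensional operator. -/
noncomputable def specSet {n : Type*} [Fintype n] [DecidableEq n] (H : Matrix n n ℝ) :
    Set ℝ := {E : ℝ | (H - E • (1 : Matrix n n ℝ)).det = 0}

/-- The Green function `G(x,y;E) = ⟨δ_x, (H-E)⁻¹ δ_y⟩`. -/
noncomputable def green {n : Type*} [Fintype n] [DecidableEq n] (H : Matrix n n ℝ)
    (E : ℝ) : Matrix n n ℝ := (H - E • (1 : Matrix n n ℝ))⁻¹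

variable [DecidableEq Z]

/-- The ball `B_r(w)` is `E`-nonresonant: `dist(Σ(H_{B_r(w)}), E) ≥ exp(-r^β)`. -/
noncomputable def IsNR (G : SimpleGraph Z) [DecidableRel G.Adj]
    [∀ v : Z, Fintype (G.neighborSet v)]
    (hfin : ∀ (x : Z) (r : ℕ), {y : Z | G.dist x y ≤ r}.Finite)
    (V : Z → ℝ) (β : ℝ) (w : Z) (r : ℕ) (E : ℝ) : Prop :=
  ∀ μ ∈ specSet (Ham G V (zball G hfin w r)), Real.exp (-(r : ℝ) ^ β) ≤ |μ - E|

/-- The ball `B_L(u)` is `(E,m)`-nonsingular: `E ∉ Σ(H_{B_L(u)})` and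
`C_d² L^d |G_{B_L(u)}(x,y;E)| ≤ exp(-m(1+L^{-τ}) d(x,y))` whenever `d(x,y) ≥ L^{(1+ϱ)/α}`. -/
noncomputable def IsNS (G : SimpleGraph Z) [DecidableRel G.Adj]
    [∀ v : Z, Fintype (G.neighborSet v)]
    (hfin : ∀ (x : Z) (r : ℕ), {y : Z | G.dist x y ≤ r}.Finite)
    (V : Z → ℝ) (Cd : ℝ) (d : ℕ) (α τ ϱ : ℝ) (u : Z) (L : ℕ) (E m : ℝ) : Prop :=
  E ∉ specSet (Ham G V (zball G hfin u L)) ∧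
  ∀ x y : (zball G hfin u L), ((L : ℝ) ^ ((1 + ϱ) / α) ≤ (G.dist (x : Z) (y : Z) : ℝ)) →
    Cd ^ 2 * (L : ℝ) ^ d * |green (Ham G V (zball G hfin u L)) E x y| ≤
      Real.exp (-(m * (1 + (L : ℝ) ^ (-τ))) * (G.dist (x : Z) (y : Z) : ℝ))

end Defs


section AuxMatrixSW
open Matrix
set_option linter.unusedSectionVars false
variable {n : Type*} [Fintype n] [DecidableEq n]

set_option linter.unusedSectionVars false
variable {n : Type*} [Fintype n] [DecidableEq n]

lemma euc_norm_sq (w : EuclideanSpace ℝ n) : ‖w‖ ^ 2 = ∑ i, (w i) ^ 2 := by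
  rw [EuclideanSpace.norm_eq, Real.sq_sqrt (by positivity)]
  simp [sq_abs]

lemma lowerBound_of_dets {A : Matrix n n ℝ} (hA : A.IsHermitian) {c : ℝ} (hc : 0 ≤ c)
    (h : ∀ ν : ℝ, (A - ν • (1 : Matrix n n ℝ)).det = 0 → c ≤ |ν|) :
    ∀ w : EuclideanSpace ℝ n, c * ‖w‖ ≤ ‖(Matrix.toEuclideanLin A) w‖ := by
  intro w
  have hsym : (Matrix.toEuclideanLin A).IsSymmetric :=
    (Matrix.isHermitian_iff_isSymmetric).mp hA
  have hrank : Module.finrank ℝ (EuclideanSpace ℝ n) = Fintype.card n :=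
    finrank_euclideanSpace
  set b := hsym.eigenvectorBasis hrank with hbdef
  set μ := hsym.eigenvalues hrank with hμdef
  have hev : ∀ i, c ≤ |μ i| := by
    intro i
    apply h
    rw [← Matrix.exists_mulVec_eq_zero_iff]
    have hvec := hsym.hasEigenvector_eigenvectorBasis hrank i
    refine ⟨(WithLp.equiv 2 (n → ℝ)) (b i), ?_, ?_⟩
    · simpa using hvec.2
    · have h1 : (Matrix.toEuclideanLin A) (b i) = (μ i : ℝ) • b i :=
        hsym.apply_eigenvectorBasis hrank i
      have h2 : A *ᵥ ((WithLp.equiv 2 (n → ℝ)) (b i))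
          = (WithLp.equiv 2 (n → ℝ)) ((Matrix.toEuclideanLin A) (b i)) :=
        rfl
      rw [Matrix.sub_mulVec, Matrix.smul_mulVec, Matrix.one_mulVec, h2, h1]
      exact sub_self _
  have hsq : (c * ‖w‖) ^ 2 ≤ ‖(Matrix.toEuclideanLin A) w‖ ^ 2 := by
    have hw : ‖w‖ ^ 2 = ∑ i, (b.repr w i) ^ 2 := by
      rw [← b.repr.norm_map w]; exact euc_norm_sq _
    have hTw : ‖(Matrix.toEuclideanLin A) w‖ ^ 2
        = ∑ i, (μ i * b.repr w i) ^ 2 := by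
      rw [← b.repr.norm_map _, euc_norm_sq]
      refine Finset.sum_congr rfl fun i _ => ?_
      rw [hsym.eigenvectorBasis_apply_self_apply hrank w i]; norm_cast
    rw [hTw, mul_pow, hw, Finset.mul_sum]
    refine Finset.sum_le_sum fun i _ => ?_
    have := hev i
    rw [mul_pow]
    have h1 : c ^ 2 ≤ (μ i) ^ 2 := by nlinarith [abs_nonneg (μ i), sq_abs (μ i)]
    nlinarith [sq_nonneg (b.repr w i)]
  nlinarith [norm_nonneg ((Matrix.toEuclideanLin A) w), mul_nonneg hc (norm_nonneg w)]


/-- sum form of the operator lower bound -/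
lemma sumLow_of_normLow {A : Matrix n n ℝ} {c : ℝ} (hc : 0 ≤ c)
    (h : ∀ w : EuclideanSpace ℝ n, c * ‖w‖ ≤ ‖(Matrix.toEuclideanLin A) w‖) :
    ∀ w : n → ℝ, c ^ 2 * (∑ i, (w i) ^ 2) ≤ ∑ i, (A.mulVec w i) ^ 2 := by
  intro w
  set W : EuclideanSpace ℝ n := (WithLp.equiv 2 (n → ℝ)).symm w with hW
  have h1 : ‖W‖ ^ 2 = ∑ i, (w i) ^ 2 := by rw [euc_norm_sq]; rfl
  have h2 : (Matrix.toEuclideanLin A) W = (WithLp.equiv 2 (n → ℝ)).symm (A.mulVec w) :=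
    rfl
  have h3 : ‖(Matrix.toEuclideanLin A) W‖ ^ 2 = ∑ i, (A.mulVec w i) ^ 2 := by
    rw [h2, euc_norm_sq]; rfl
  have h4 := h W
  calc c ^ 2 * (∑ i, (w i) ^ 2) = (c * ‖W‖) ^ 2 := by rw [mul_pow, h1]
    _ ≤ ‖(Matrix.toEuclideanLin A) W‖ ^ 2 := by
        have := norm_nonneg ((Matrix.toEuclideanLin A) W)
        nlinarith [mul_nonneg hc (norm_nonneg W)]
    _ = ∑ i, (A.mulVec w i) ^ 2 := h3

lemma det_ne_of_sumLow {A : Matrix n n ℝ} {c : ℝ} (hc : 0 < c)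
    (h : ∀ w : n → ℝ, c ^ 2 * (∑ i, (w i) ^ 2) ≤ ∑ i, (A.mulVec w i) ^ 2) :
    A.det ≠ 0 := by
  intro hdet
  obtain ⟨w, hw0, hww⟩ := (Matrix.exists_mulVec_eq_zero_iff).mpr hdet
  have h1 : c ^ 2 * ∑ i, (w i) ^ 2 ≤ 0 := by
    have := h w
    rw [hww] at this
    simpa using this
  have h2 : ∑ i, (w i) ^ 2 ≤ 0 := by nlinarith [pow_pos hc 2]
  have h3 : ∀ i, w i = 0 := by
    intro i
    have h4 : ∑ i, (w i) ^ 2 = 0 := le_antisymm h2 (Finset.sum_nonneg fun i _ => sq_nonneg (w i))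
    have := (Finset.sum_eq_zero_iff_of_nonneg (fun i (_ : i ∈ Finset.univ) => sq_nonneg (w i))).mp h4 i (Finset.mem_univ i)
    exact pow_eq_zero_iff (by norm_num) |>.mp this
  exact hw0 (funext h3)

lemma col_bound_of_sumLow {A : Matrix n n ℝ} {c : ℝ} (hc : 0 < c)
    (h : ∀ w : n → ℝ, c ^ 2 * (∑ i, (w i) ^ 2) ≤ ∑ i, (A.mulVec w i) ^ 2)
    (y : n) : c ^ 2 * ∑ i, (A⁻¹ i y) ^ 2 ≤ 1 := by
  have hdet := det_ne_of_sumLow hc h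
  set u : n → ℝ := fun i => A⁻¹ i y with hu
  have h1 : A.mulVec u = Pi.single y 1 := by
    have h2 : u = A⁻¹.mulVec (Pi.single y 1) := by
      rw [Matrix.mulVec_single_one]; rfl
    rw [h2, Matrix.mulVec_mulVec, Matrix.mul_nonsing_inv A (isUnit_iff_ne_zero.mpr hdet),
      Matrix.one_mulVec]
  have h3 := h u
  rw [h1] at h3
  have h4 : ∑ i, ((Pi.single y (1:ℝ) : n → ℝ) i) ^ 2 = 1 := by
    rw [Finset.sum_eq_single y] <;> simp +contextual [Pi.single_apply]
  rw [h4] at h3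
  exact h3

lemma entry_bound_of_sumLow {A : Matrix n n ℝ} {c : ℝ} (hc : 0 < c)
    (h : ∀ w : n → ℝ, c ^ 2 * (∑ i, (w i) ^ 2) ≤ ∑ i, (A.mulVec w i) ^ 2)
    (x y : n) : c * |A⁻¹ x y| ≤ 1 := by
  have h1 := col_bound_of_sumLow hc h y
  have h2 : (A⁻¹ x y) ^ 2 ≤ ∑ i, (A⁻¹ i y) ^ 2 :=
    Finset.single_le_sum (fun i (_ : i ∈ Finset.univ) => sq_nonneg (A⁻¹ i y)) (Finset.mem_univ x)
  nlinarith [abs_nonneg (A⁻¹ x y), sq_abs (A⁻¹ x y), mul_nonneg hc.le (abs_nonneg (A⁻¹ x y))]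

lemma prod_entry_bound_of_sumLow {A B : Matrix n n ℝ} {c c' : ℝ} (hc : 0 < c) (hc' : 0 < c')
    (hA : ∀ w : n → ℝ, c ^ 2 * (∑ i, (w i) ^ 2) ≤ ∑ i, (A.mulVec w i) ^ 2)
    (hB : ∀ w : n → ℝ, c' ^ 2 * (∑ i, (w i) ^ 2) ≤ ∑ i, (B.mulVec w i) ^ 2)
    (hBsym : Bᵀ = B) (x v : n) :
    (c' * c) * |(B⁻¹ * A⁻¹) x v| ≤ 1 := by
  have hBi : ∀ i j, B⁻¹ i j = B⁻¹ j i := by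
    intro i j
    conv_lhs => rw [← hBsym]
    rw [← Matrix.transpose_nonsing_inv]
    rfl
  have h1 : ((B⁻¹ * A⁻¹) x v) ^ 2 ≤ (∑ y, (B⁻¹ x y) ^ 2) * ∑ y, (A⁻¹ y v) ^ 2 := by
    rw [Matrix.mul_apply]
    exact Finset.sum_mul_sq_le_sq_mul_sq _ _ _
  have h2 : ∑ y, (B⁻¹ x y) ^ 2 = ∑ y, (B⁻¹ y x) ^ 2 := by
    refine Finset.sum_congr rfl fun y _ => by rw [hBi]
  have h3 := col_bound_of_sumLow hc' hB x
  have h4 := col_bound_of_sumLow hc hA v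
  rw [h2] at h1
  have h5 : ((c' * c) * |(B⁻¹ * A⁻¹) x v|) ^ 2 ≤ 1 := by
    have e1 : ((c' * c) * |(B⁻¹ * A⁻¹) x v|) ^ 2
        = (c' ^ 2 * c ^ 2) * ((B⁻¹ * A⁻¹) x v) ^ 2 := by
      rw [mul_pow, mul_pow, sq_abs]
    rw [e1]
    calc (c' ^ 2 * c ^ 2) * ((B⁻¹ * A⁻¹) x v) ^ 2
        ≤ (c' ^ 2 * c ^ 2) * ((∑ y, (B⁻¹ y x) ^ 2) * ∑ y, (A⁻¹ y v) ^ 2) := by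
          apply mul_le_mul_of_nonneg_left h1 (by positivity)
      _ = (c' ^ 2 * ∑ y, (B⁻¹ y x) ^ 2) * (c ^ 2 * ∑ y, (A⁻¹ y v) ^ 2) := by ring
      _ ≤ 1 * 1 := by
          apply mul_le_mul h3 h4 (by positivity) (by linarith [col_bound_of_sumLow hc' hB x])
      _ = 1 := by ring
  nlinarith [mul_nonneg (mul_nonneg hc'.le hc.le) (abs_nonneg ((B⁻¹ * A⁻¹) x v))]

lemma diag_bound_of_sumLow {A : Matrix n n ℝ} {c : ℝ}
    (h : ∀ w : n → ℝ, c ^ 2 * (∑ i, (w i) ^ 2) ≤ ∑ i, (A.mulVec w i) ^ 2)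
    (x : n) (hoff : ∀ i, i ≠ x → (A i x) ^ 2 ≤ 1) :
    c ^ 2 - ((Fintype.card n : ℝ) - 1) ≤ (A x x) ^ 2 := by
  have h1 := h (Pi.single x 1)
  have h2 : ∑ i, ((Pi.single x (1:ℝ) : n → ℝ) i) ^ 2 = 1 := by
    rw [Finset.sum_eq_single x] <;> simp +contextual [Pi.single_apply]
  have h3 : A.mulVec (Pi.single x 1) = fun i => A i x := by
    rw [Matrix.mulVec_single_one]; rfl
  rw [h2, h3, mul_one] at h1
  have h4 : ∑ i, (A i x) ^ 2 = (A x x) ^ 2 + ∑ i ∈ Finset.univ.erase x, (A i x) ^ 2 := by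
    rw [← Finset.add_sum_erase _ _ (Finset.mem_univ x)]
  have h5 : ∑ i ∈ Finset.univ.erase x, (A i x) ^ 2 ≤ (Fintype.card n : ℝ) - 1 := by
    calc ∑ i ∈ Finset.univ.erase x, (A i x) ^ 2
        ≤ ∑ _i ∈ Finset.univ.erase x, (1:ℝ) :=
          Finset.sum_le_sum fun i hi => hoff i (Finset.mem_erase.mp hi).1
      _ = ((Finset.univ.erase x).card : ℝ) := by simp
      _ = (Fintype.card n : ℝ) - 1 := by
          rw [Finset.card_erase_of_mem (Finset.mem_univ x)]
          rw [Nat.cast_sub (by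
            have : 0 < Fintype.card n := Fintype.card_pos_iff.mpr ⟨x⟩
            simpa [Finset.card_univ] using Nat.succ_le_of_lt this)]
          simp [Finset.card_univ]
  linarith [h1, h4 ▸ h1]


set_option maxHeartbeats 1000000 in
/-- The deterministic core of the singular-width theorem. -/
lemma det_core {H : Matrix n n ℝ} (hH : H.IsHermitian)
    (hoff : ∀ i j : n, i ≠ j → |H i j| ≤ 1)
    {E a b c : ℝ} (ha : 0 < a) (hb : 0 < b) (hc : 0 < c)
    (hbN : b * (Fintype.card n : ℝ) ≤ a * c ^ 2)
    (hspec : ∀ μ : ℝ, (H - μ • (1 : Matrix n n ℝ)).det = 0 → c < |E - μ|)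
    (x v : n) (hxv : x ≠ v)
    (hG : 2 * a ≤ |(H - E • (1 : Matrix n n ℝ))⁻¹ x v|) :
    b ≤ 1 / 2 ∧ ∀ E' : ℝ, |E' - E| ≤ b →
      ((H - E' • (1 : Matrix n n ℝ)).det ≠ 0 ∧
        a ≤ |(H - E' • (1 : Matrix n n ℝ))⁻¹ x v|) := by
  classical
  set A := H - E • (1 : Matrix n n ℝ) with hAdef
  have hAh : A.IsHermitian := by
    unfold A
    unfold Matrix.IsHermitian
    rw [Matrix.conjTranspose_sub, Matrix.conjTranspose_smul, Matrix.conjTranspose_one, hH.eq]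
    norm_num
  -- eigenvalue separation for A
  have hroots : ∀ ν : ℝ, (A - ν • (1 : Matrix n n ℝ)).det = 0 → c ≤ |ν| := by
    intro ν hdet
    have h1 : A - ν • (1 : Matrix n n ℝ) = H - (E + ν) • (1 : Matrix n n ℝ) := by
      rw [hAdef, add_smul]; abel
    rw [h1] at hdet
    have := hspec (E + ν) hdet
    have h2 : |E - (E + ν)| = |ν| := by rw [show E - (E + ν) = -ν by ring, abs_neg]
    rw [h2] at this
    exact this.le
  have hlowA := lowerBound_of_dets hAh hc.le hroots
  have SA := sumLow_of_normLow hc.le hlowA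
  have hdetA : A.det ≠ 0 := det_ne_of_sumLow hc SA
  -- basic entry bound: 2*a*c ≤ 1
  have hRxv : c * |A⁻¹ x v| ≤ 1 := entry_bound_of_sumLow hc SA x v
  have h2ac : 2 * a * c ≤ 1 := by nlinarith
  -- cardinality
  set N : ℝ := (Fintype.card n : ℝ) with hNdef
  have hN2n : 2 ≤ Fintype.card n := by
    rw [Nat.succ_le_iff, Fintype.one_lt_card_iff]
    exact ⟨x, v, hxv⟩
  have hN2 : (2 : ℝ) ≤ N := by rw [hNdef]; exact_mod_cast hN2n
  have hbc4 : 4 * b ≤ c := by nlinarith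
  have hcb : 0 < c - b := by linarith
  -- off-diagonal entries of A
  have hoffA : ∀ i j : n, i ≠ j → (A i j) ^ 2 ≤ 1 := by
    intro i j hij
    have h1 : A i j = H i j := by
      simp [hAdef, Matrix.sub_apply, Matrix.smul_apply, Matrix.one_apply_ne hij]
    rw [h1]
    have := hoff i j hij
    nlinarith [abs_nonneg (H i j), sq_abs (H i j)]
  constructor
  · -- b ≤ 1/2
    rcases le_or_gt c N with hcN | hNc
    · nlinarith
    · -- bootstrap regime
      set γ : ℝ := Real.sqrt (c ^ 2 - (N - 1)) with hγdef
      have hγnn : (0:ℝ) ≤ c ^ 2 - (N - 1) := by nlinarith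
      have hγsq : γ ^ 2 = c ^ 2 - (N - 1) := Real.sq_sqrt hγnn
      have hγ0 : 0 ≤ γ := Real.sqrt_nonneg _
      have hdiag : ∀ i : n, γ ≤ |A i i| := by
        intro i
        have h1 := diag_bound_of_sumLow SA i (fun j hj => hoffA j i hj)
        calc γ = Real.sqrt (c ^ 2 - (N - 1)) := rfl
          _ ≤ Real.sqrt ((A i i) ^ 2) := Real.sqrt_le_sqrt (by rw [hNdef] at *; linarith)
          _ = |A i i| := Real.sqrt_sq_eq_abs _
      -- the max of off-diagonal entries of the column v
      set s : Finset n := Finset.univ.erase v with hsdef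
      have hxs : x ∈ s := Finset.mem_erase.mpr ⟨hxv, Finset.mem_univ x⟩
      have hs : s.Nonempty := ⟨x, hxs⟩
      obtain ⟨z, hzs, hzT⟩ := Finset.exists_mem_eq_sup' hs (fun y => |A⁻¹ y v|)
      have hzv : z ≠ v := (Finset.mem_erase.mp hzs).1
      have hmax : ∀ y ∈ s, |A⁻¹ y v| ≤ |A⁻¹ z v| := fun y hy =>
        hzT ▸ Finset.le_sup' (fun y => |A⁻¹ y v|) hy
      set T : ℝ := |A⁻¹ z v| with hTdef
      have hxT : |A⁻¹ x v| ≤ T := hmax x hxs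
      have hTnn : 0 ≤ T := abs_nonneg _
      -- row identity at z
      have hrow : ∑ y, A z y * A⁻¹ y v = 0 := by
        have h1 : (A * A⁻¹) z v = (1 : Matrix n n ℝ) z v := by
          rw [Matrix.mul_nonsing_inv A (isUnit_iff_ne_zero.mpr hdetA)]
        rw [Matrix.mul_apply] at h1
        rw [h1, Matrix.one_apply_ne hzv]
      have hsplit : A z z * A⁻¹ z v = -∑ y ∈ Finset.univ.erase z, A z y * A⁻¹ y v := by
        have := Finset.add_sum_erase Finset.univ (fun y => A z y * A⁻¹ y v) (Finset.mem_univ z)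
        rw [hrow] at this
        linarith [this]
      -- bound the right side
      have hvz : v ∈ Finset.univ.erase z := Finset.mem_erase.mpr ⟨(Ne.symm hzv), Finset.mem_univ v⟩
      have hRvv : c * |A⁻¹ v v| ≤ 1 := entry_bound_of_sumLow hc SA v v
      have hbound : γ * T ≤ |A⁻¹ v v| + (N - 2) * T := by
        have h1 : |A z z| * |A⁻¹ z v| ≤ ∑ y ∈ Finset.univ.erase z, |A z y * A⁻¹ y v| := by
          rw [← abs_mul]
          calc |A z z * A⁻¹ z v| = |∑ y ∈ Finset.univ.erase z, A z y * A⁻¹ y v| := by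
                rw [hsplit, abs_neg]
            _ ≤ ∑ y ∈ Finset.univ.erase z, |A z y * A⁻¹ y v| :=
                Finset.abs_sum_le_sum_abs _ _
        have h2 : ∑ y ∈ Finset.univ.erase z, |A z y * A⁻¹ y v|
            ≤ |A⁻¹ v v| + (N - 2) * T := by
          rw [← Finset.add_sum_erase _ _ hvz]
          have e1 : |A z v * A⁻¹ v v| ≤ |A⁻¹ v v| := by
            rw [abs_mul]
            have hAzv : |A z v| ≤ 1 := by
              have h3 : A z v = H z v := by
                simp [hAdef, Matrix.sub_apply, Matrix.smul_apply, Matrix.one_apply_ne hzv]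
              rw [h3]; exact hoff z v hzv
            calc |A z v| * |A⁻¹ v v| ≤ 1 * |A⁻¹ v v| :=
                  mul_le_mul_of_nonneg_right hAzv (abs_nonneg _)
              _ = |A⁻¹ v v| := one_mul _
          have e2 : ∑ y ∈ (Finset.univ.erase z).erase v, |A z y * A⁻¹ y v|
              ≤ (N - 2) * T := by
            calc ∑ y ∈ (Finset.univ.erase z).erase v, |A z y * A⁻¹ y v|
                ≤ ∑ y ∈ (Finset.univ.erase z).erase v, T := by
                  refine Finset.sum_le_sum fun y hy => ?_
                  have hyv : y ≠ v := (Finset.mem_erase.mp hy).1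
                  have hyz : y ≠ z := (Finset.mem_erase.mp (Finset.mem_erase.mp hy).2).1
                  have hys : y ∈ s := Finset.mem_erase.mpr ⟨hyv, Finset.mem_univ y⟩
                  have g1 : |A⁻¹ y v| ≤ T := hmax y hys
                  have g2 : |A z y| ≤ 1 := by
                    have h3 : A z y = H z y := by
                      simp [hAdef, Matrix.sub_apply, Matrix.smul_apply,
                        Matrix.one_apply_ne (Ne.symm hyz)]
                    rw [h3]; exact hoff z y (Ne.symm hyz)
                  rw [abs_mul]
                  nlinarith [abs_nonneg (A z y), abs_nonneg (A⁻¹ y v)]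
              _ = ((Finset.univ.erase z).erase v).card * T := by
                  rw [Finset.sum_const, nsmul_eq_mul]
              _ ≤ (N - 2) * T := by
                  have hcard : ((Finset.univ.erase z).erase v).card = Fintype.card n - 2 := by
                    rw [Finset.card_erase_of_mem hvz, Finset.card_erase_of_mem (Finset.mem_univ z),
                      Finset.card_univ]
                    omega
                  rw [hcard]
                  have : ((Fintype.card n - 2 : ℕ) : ℝ) = N - 2 := by
                    rw [Nat.cast_sub hN2n, hNdef]; norm_num
                  rw [this]
          linarith
        calc γ * T = γ * |A⁻¹ z v| := rfl
          _ ≤ |A z z| * |A⁻¹ z v| := by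
              apply mul_le_mul_of_nonneg_right (hdiag z) (abs_nonneg _)
          _ ≤ |A⁻¹ v v| + (N - 2) * T := le_trans h1 h2
      -- γ is large: N * γ ≥ c + N * (N - 2)
      have hNγ : c + N * (N - 2) ≤ N * γ := by
        have h1 : (N * γ) ^ 2 = N ^ 2 * (c ^ 2 - (N - 1)) := by
          rw [mul_pow, hγsq]
        have h2 : (c + N * (N - 2)) ^ 2 ≤ (N * γ) ^ 2 := by
          rw [h1]
          nlinarith [sq_nonneg (c - N), mul_nonneg (sub_nonneg.mpr hNc.le)
            (sub_nonneg.mpr hN2), hN2, hNc]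
        nlinarith [mul_nonneg (by linarith : (0:ℝ) ≤ N) hγ0,
          (by nlinarith : (0:ℝ) ≤ c + N * (N - 2))]
      -- conclude
      have hT2a : 2 * a ≤ T := le_trans hG hxT
      have hkey : (γ - (N - 2)) * T ≤ |A⁻¹ v v| := by nlinarith
      have hγN2 : c ≤ N * (γ - (N - 2)) := by nlinarith
      -- c^2 * T ≤ N
      have hfin : c * ((γ - (N - 2)) * T) ≤ 1 := by
        calc c * ((γ - (N - 2)) * T) ≤ c * |A⁻¹ v v| := by
              apply mul_le_mul_of_nonneg_left hkey hc.le
          _ ≤ 1 := hRvv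
      have hgpos : 0 < γ - (N - 2) := by nlinarith
      have hc2T : c ^ 2 * T ≤ N := by
        have h1 : c * (c * T) ≤ N * ((γ - (N - 2)) * c * T) := by
          have := mul_le_mul_of_nonneg_right hγN2 (mul_nonneg hc.le hTnn)
          nlinarith [this]
        nlinarith [hfin, mul_le_mul_of_nonneg_left hfin (by linarith : (0:ℝ) ≤ N)]
      nlinarith [hT2a, mul_le_mul_of_nonneg_left hT2a (by positivity : (0:ℝ) ≤ c ^ 2)]
  · -- Green function stability
    intro E' hE'
    set B := H - E' • (1 : Matrix n n ℝ) with hBdef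
    have hBA : B = A - (E' - E) • (1 : Matrix n n ℝ) := by
      rw [hBdef, hAdef, sub_smul]; abel
    -- operator lower bound for B
    have hlowB : ∀ w : EuclideanSpace ℝ n, (c - b) * ‖w‖ ≤ ‖(Matrix.toEuclideanLin B) w‖ := by
      intro w
      have hone : (Matrix.toEuclideanLin (1 : Matrix n n ℝ)) w = w := by
        rw [Matrix.toEuclideanLin_apply]
        simp [Matrix.one_mulVec]
      have h1 : (Matrix.toEuclideanLin B) w
          = (Matrix.toEuclideanLin A) w - (E' - E) • w := by
        calc (Matrix.toEuclideanLin B) w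
            = (Matrix.toEuclideanLin (A - (E' - E) • (1 : Matrix n n ℝ))) w := by rw [← hBA]
          _ = (Matrix.toEuclideanLin A) w
              - (E' - E) • (Matrix.toEuclideanLin (1 : Matrix n n ℝ)) w := by
              rw [map_sub, _root_.map_smul]
              simp [LinearMap.sub_apply, LinearMap.smul_apply]
          _ = (Matrix.toEuclideanLin A) w - (E' - E) • w := by rw [hone]
      rw [h1]
      have h2 := norm_sub_norm_le ((Matrix.toEuclideanLin A) w) ((E' - E) • w)
      have h3 : ‖(E' - E) • w‖ = |E' - E| * ‖w‖ := by
        rw [norm_smul, Real.norm_eq_abs]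
      have h4 := hlowA w
      have h5 : |E' - E| * ‖w‖ ≤ b * ‖w‖ :=
        mul_le_mul_of_nonneg_right hE' (norm_nonneg w)
      nlinarith [norm_nonneg w]
    have SB := sumLow_of_normLow hcb.le hlowB
    have hdetB : B.det ≠ 0 := det_ne_of_sumLow hcb SB
    refine ⟨hdetB, ?_⟩
    -- resolvent identity
    have hBsym : Bᵀ = B := by
      have hBh : B.IsHermitian := by
        unfold B
        unfold Matrix.IsHermitian
        rw [Matrix.conjTranspose_sub, Matrix.conjTranspose_smul, Matrix.conjTranspose_one, hH.eq]
        norm_num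
      simpa using (congrArg Matrix.transpose hBh.eq).symm
    have hres : B⁻¹ - A⁻¹ = (E' - E) • (B⁻¹ * A⁻¹) := by
      have e1 : B⁻¹ * A * A⁻¹ = B⁻¹ := by
        rw [Matrix.mul_assoc, Matrix.mul_nonsing_inv A (isUnit_iff_ne_zero.mpr hdetA),
          Matrix.mul_one]
      have e2 : B⁻¹ * B * A⁻¹ = A⁻¹ := by
        rw [Matrix.nonsing_inv_mul B (isUnit_iff_ne_zero.mpr hdetB), Matrix.one_mul]
      have e3 : A - B = (E' - E) • (1 : Matrix n n ℝ) := by rw [hBA]; abel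
      calc B⁻¹ - A⁻¹ = B⁻¹ * A * A⁻¹ - B⁻¹ * B * A⁻¹ := by rw [e1, e2]
        _ = B⁻¹ * (A - B) * A⁻¹ := by noncomm_ring
        _ = B⁻¹ * ((E' - E) • (1 : Matrix n n ℝ)) * A⁻¹ := by rw [e3]
        _ = (E' - E) • (B⁻¹ * A⁻¹) := by
            rw [Matrix.mul_smul, Matrix.mul_one, Matrix.smul_mul]
    have hdiff : |B⁻¹ x v - A⁻¹ x v| ≤ b * |(B⁻¹ * A⁻¹) x v| := by
      have h1 : B⁻¹ x v - A⁻¹ x v = (E' - E) * (B⁻¹ * A⁻¹) x v := by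
        have := congrFun (congrFun hres x) v
        simpa [Matrix.sub_apply, Matrix.smul_apply, smul_eq_mul] using this
      rw [h1, abs_mul]
      exact mul_le_mul_of_nonneg_right hE' (abs_nonneg _)
    have hprod : ((c - b) * c) * |(B⁻¹ * A⁻¹) x v| ≤ 1 :=
      prod_entry_bound_of_sumLow hc hcb SA SB hBsym x v
    -- b * |entry| ≤ a
    have hba : b * |(B⁻¹ * A⁻¹) x v| ≤ a := by
      have hkey : b ≤ a * ((c - b) * c) := by nlinarith
      calc b * |(B⁻¹ * A⁻¹) x v| ≤ (a * ((c - b) * c)) * |(B⁻¹ * A⁻¹) x v| :=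
            mul_le_mul_of_nonneg_right hkey (abs_nonneg _)
        _ = a * (((c - b) * c) * |(B⁻¹ * A⁻¹) x v|) := by ring
        _ ≤ a * 1 := mul_le_mul_of_nonneg_left hprod ha.le
        _ = a := mul_one a
    have habs : |A⁻¹ x v| - |B⁻¹ x v| ≤ a := by
      have := abs_sub_abs_le_abs_sub (A⁻¹ x v) (B⁻¹ x v)
      have h2 : |A⁻¹ x v - B⁻¹ x v| = |B⁻¹ x v - A⁻¹ x v| := abs_sub_comm _ _
      linarith [le_trans hdiff hba]
    linarith

end AuxMatrixSW

open scoped ENNReal Classical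

/-- `M_x(E) = max_{v ∈ ∂⁻ B_L(x)} |G_{B_L(x)}(x,v;E)|`, the maximum of the Green function
from the centre to the inner boundary of `B_L(x)`, with the convention `M_x(E) = +∞` when
`E ∈ Σ(H_{B_L(x)})`.  A point `v ∈ B_L(x)` belongs to the inner boundary `∂⁻ B_L(x)` iff
it has a neighbour outside `B_L(x)`. -/
noncomputable def Mfn {Z : Type*} [DecidableEq Z] (G : SimpleGraph Z) [DecidableRel G.Adj]
    [∀ v : Z, Fintype (G.neighborSet v)]
    (hfin : ∀ (x : Z) (r : ℕ), {y : Z | G.dist x y ≤ r}.Finite)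
    (V : Z → ℝ) (x : Z) (L : ℕ) (E : ℝ) : ℝ≥0∞ :=
  if E ∈ specSet (Ham G V (zball G hfin x L)) then ⊤
  else ⨆ (v : (zball G hfin x L)) (_ : ∃ w : Z, G.Adj (v : Z) w ∧ L < G.dist x w),
    ENNReal.ofReal |green (Ham G V (zball G hfin x L)) E ⟨x, self_mem_zball G hfin x L⟩ v|


section HamFactsSW
variable {Z : Type*} [DecidableEq Z] (G : SimpleGraph Z) [DecidableRel G.Adj]
    [∀ v : Z, Fintype (G.neighborSet v)] (V : Z → ℝ) (Λ : Finset Z)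

variable {Z : Type*} [DecidableEq Z] (G : SimpleGraph Z) [DecidableRel G.Adj]
    [∀ v : Z, Fintype (G.neighborSet v)] (V : Z → ℝ) (Λ : Finset Z)

lemma ham_isHermitian : (Ham G V Λ).IsHermitian := by
  unfold Matrix.IsHermitian
  ext i j
  simp only [Matrix.conjTranspose_apply, Ham, star_trivial]
  by_cases h : (i : Z) = (j : Z)
  · have hji : ((j : Z) : Z) = (i : Z) := h.symm
    rw [if_pos h, if_pos hji, h]
  · rw [if_neg h, if_neg (fun hji => h hji.symm)]
    rw [if_congr (G.adj_comm (j : Z) (i : Z)) rfl rfl]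

lemma ham_offdiag (i j : Λ) (hij : i ≠ j) : |Ham G V Λ i j| ≤ 1 := by
  have h : (i : Z) ≠ (j : Z) := fun h => hij (Subtype.ext h)
  simp only [Ham, if_neg h]
  rcases em (G.Adj (i : Z) (j : Z)) with ha | ha
  · rw [if_pos ha]; norm_num
  · rw [if_neg ha]; norm_num

end HamFactsSW

open MeasureTheory

set_option maxHeartbeats 2000000 in
theorem statement6 {Z : Type*} [DecidableEq Z] (G : SimpleGraph Z) [DecidableRel G.Adj]
    [∀ v : Z, Fintype (G.neighborSet v)]
    (hconn : G.Connected) (hcount : Countable Z)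
    (hfin : ∀ (x : Z) (r : ℕ), {y : Z | G.dist x y ≤ r}.Finite)
    {Ω : Type*} [MeasurableSpace Ω] (Pr : Measure Ω) [IsProbabilityMeasure Pr]
    (V : Z → Ω → ℝ)
    (I : Set ℝ) (t₀ : ℝ) (hI : I = Set.Icc t₀ (t₀ + 1))
    (x : Z) (L : ℕ) (hL : 1 ≤ L)
    -- joint measurability of `(ω, E) ↦ M_x(E; ω)`
    (hmeas : Measurable fun p : Ω × ℝ => Mfn G hfin (fun z => V z p.1) x L p.2)
    (a b c PL : ℝ) (ha : 0 < a) (hb : 0 < b) (hc : 0 < c) (hPL : 0 < PL)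
    (hbmin : b ≤ min ((((zball G hfin x L).card : ℝ))⁻¹ * a * c ^ 2) c)
    -- fixed-energy bound: for every `E ∈ I`, `Pr(M_x(E) ≥ a) ≤ P_L`
    (hfixed : ∀ E ∈ I,
      Pr {ω | ENNReal.ofReal a ≤ Mfn G hfin (fun z => V z ω) x L E} ≤ ENNReal.ofReal PL) :
    ∃ B : Set Ω, MeasurableSet B ∧ Pr B ≤ ENNReal.ofReal (b⁻¹ * PL) ∧
      ∀ ω ∉ B, ∀ E ∈ I,
        ENNReal.ofReal (2 * a) ≤ Mfn G hfin (fun z => V z ω) x L E →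
        ∃ μ ∈ specSet (Ham G (fun z => V z ω) (zball G hfin x L)), |E - μ| ≤ c := by
  classical
  set Λ : Finset Z := zball G hfin x L with hΛ
  set x0 : ↥Λ := ⟨x, self_mem_zball G hfin x L⟩ with hx0
  set F : Ω × ℝ → ℝ≥0∞ := fun p => Mfn G hfin (fun z => V z p.1) x L p.2 with hF
  have hS : MeasurableSet {p : Ω × ℝ | ENNReal.ofReal a ≤ F p} :=
    measurableSet_le measurable_const hmeas
  have hIm : MeasurableSet I := by rw [hI]; exact measurableSet_Icc
  set ν : Measure ℝ := (volume : Measure ℝ).restrict I with hν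
  set m : Ω → ℝ≥0∞ := fun ω => ν {e | ENNReal.ofReal a ≤ F (ω, e)} with hm
  have hmmeas : Measurable m := by
    have h1 := measurable_measure_prodMk_left (ν := ν) hS
    simp only [Set.preimage_setOf_eq] at h1
    exact h1
  set B : Set Ω := {ω | ENNReal.ofReal b ≤ m ω} with hB
  have hBmeas : MeasurableSet B := measurableSet_le measurable_const hmmeas
  have hvolI : ν Set.univ = 1 := by
    rw [hν, Measure.restrict_apply_univ, hI, Real.volume_Icc]
    norm_num
  refine ⟨B, hBmeas, ?_, ?_⟩
  · -- probability bound
    have cheb := MeasureTheory.mul_meas_ge_le_lintegral₀ (μ := Pr) hmmeas.aemeasurable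
      (ENNReal.ofReal b)
    have hint : ∫⁻ ω, m ω ∂Pr ≤ ENNReal.ofReal PL := by
      have h1 : ∀ ω : Ω, m ω = ∫⁻ e,
          ({p : Ω × ℝ | ENNReal.ofReal a ≤ F p}.indicator
            (1 : Ω × ℝ → ℝ≥0∞) (ω, e)) ∂ν := by
        intro ω
        have h2 : ∀ e : ℝ, ({p : Ω × ℝ | ENNReal.ofReal a ≤ F p}.indicator
            (1 : Ω × ℝ → ℝ≥0∞) (ω, e))
            = (Prod.mk ω ⁻¹' {p : Ω × ℝ | ENNReal.ofReal a ≤ F p}).indicator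
              (1 : ℝ → ℝ≥0∞) e := fun e => rfl
        simp_rw [h2]
        rw [MeasureTheory.lintegral_indicator_one (measurable_prodMk_left hS)]
        rw [hm]
        simp only [Set.preimage_setOf_eq]
      have h3 : ∫⁻ ω, m ω ∂Pr = ∫⁻ e, (∫⁻ ω,
          ({p : Ω × ℝ | ENNReal.ofReal a ≤ F p}.indicator
            (1 : Ω × ℝ → ℝ≥0∞) (ω, e)) ∂Pr) ∂ν := by
        rw [← MeasureTheory.lintegral_lintegral_swap]
        · exact lintegral_congr h1
        · exact ((measurable_one.indicator hS).aemeasurable)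
      rw [h3]
      have h4 : ∀ e ∈ I, (∫⁻ ω, ({p : Ω × ℝ | ENNReal.ofReal a ≤ F p}.indicator
          (1 : Ω × ℝ → ℝ≥0∞) (ω, e)) ∂Pr) ≤ ENNReal.ofReal PL := by
        intro e he
        have h5 : ∀ ω : Ω, ({p : Ω × ℝ | ENNReal.ofReal a ≤ F p}.indicator
            (1 : Ω × ℝ → ℝ≥0∞) (ω, e))
            = ((fun ω : Ω => (ω, e)) ⁻¹' {p : Ω × ℝ | ENNReal.ofReal a ≤ F p}).indicator
              (1 : Ω → ℝ≥0∞) ω := fun ω => rfl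
        simp_rw [h5]
        rw [MeasureTheory.lintegral_indicator_one
          (hS.preimage (measurable_prodMk_right))]
        exact hfixed e he
      calc ∫⁻ e, (∫⁻ ω, ({p : Ω × ℝ | ENNReal.ofReal a ≤ F p}.indicator
            (1 : Ω × ℝ → ℝ≥0∞) (ω, e)) ∂Pr) ∂ν
          ≤ ∫⁻ _ , ENNReal.ofReal PL ∂ν := by
            rw [hν]
            refine MeasureTheory.setLIntegral_mono measurable_const ?_
            exact h4
        _ = ENNReal.ofReal PL := by rw [MeasureTheory.lintegral_const, hvolI, mul_one]
    have hob : ENNReal.ofReal b ≠ 0 := by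
      simp only [ne_eq, ENNReal.ofReal_eq_zero, not_le]; exact hb
    calc Pr B = (ENNReal.ofReal b)⁻¹ * (ENNReal.ofReal b * Pr B) := by
          rw [← mul_assoc, ENNReal.inv_mul_cancel hob ENNReal.ofReal_ne_top, one_mul]
      _ ≤ (ENNReal.ofReal b)⁻¹ * ENNReal.ofReal PL := by
          refine mul_le_mul_right (le_trans cheb hint) _
      _ = ENNReal.ofReal (b⁻¹ * PL) := by
          rw [ENNReal.ofReal_mul (inv_nonneg.mpr hb.le), ENNReal.ofReal_inv_of_pos hb]
  · -- the complement property
    intro ω hωB E hEI hME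
    by_contra hcon
    push_neg at hcon
    set Hm : Matrix (↥Λ) (↥Λ) ℝ := Ham G (fun z => V z ω) Λ with hHm
    have hspec : ∀ μ : ℝ, (Hm - μ • (1 : Matrix (↥Λ) (↥Λ) ℝ)).det = 0 → c < |E - μ| := by
      intro μ hdet
      have hmem : μ ∈ specSet Hm := hdet
      exact hcon μ hmem
    have hEspec : E ∉ specSet Hm := by
      intro hmem
      have h1 := hcon E hmem
      simp at h1
      linarith
    have hMEs : ENNReal.ofReal (2 * a) ≤
        ⨆ (v : ↥Λ) (_ : ∃ w : Z, G.Adj (v : Z) w ∧ L < G.dist x w),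
          ENNReal.ofReal |green Hm E x0 v| := by
      have h0 : Mfn G hfin (fun z => V z ω) x L E =
          ⨆ (v : ↥Λ) (_ : ∃ w : Z, G.Adj (v : Z) w ∧ L < G.dist x w),
            ENNReal.ofReal |green Hm E x0 v| := by
        simp only [Mfn]
        rw [if_neg hEspec]
      rw [← h0]
      exact hME
    -- extract a boundary point with a large Green function
    have hex : ∃ v : ↥Λ, (∃ w : Z, G.Adj (v : Z) w ∧ L < G.dist x w) ∧
        2 * a ≤ |green Hm E x0 v| := by
      by_contra hno
      push_neg at hno
      have h2a : (0 : ℝ) < 2 * a := by linarith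
      have hlt : ∀ v : ↥Λ, (⨆ (_ : ∃ w : Z, G.Adj (v : Z) w ∧ L < G.dist x w),
          ENNReal.ofReal |green Hm E x0 v|) < ENNReal.ofReal (2 * a) := by
        intro v
        by_cases hv : ∃ w : Z, G.Adj (v : Z) w ∧ L < G.dist x w
        · rw [iSup_pos hv]
          exact (ENNReal.ofReal_lt_ofReal_iff h2a).mpr (hno v hv)
        · rw [iSup_neg hv]
          exact ENNReal.ofReal_pos.mpr h2a
      have hfin2 : (⨆ (v : ↥Λ) (_ : ∃ w : Z, G.Adj (v : Z) w ∧ L < G.dist x w),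
          ENNReal.ofReal |green Hm E x0 v|) < ENNReal.ofReal (2 * a) := by
        have he : (⨆ (v : ↥Λ) (_ : ∃ w : Z, G.Adj (v : Z) w ∧ L < G.dist x w),
            ENNReal.ofReal |green Hm E x0 v|)
            = Finset.univ.sup (fun v : ↥Λ =>
              ⨆ (_ : ∃ w : Z, G.Adj (v : Z) w ∧ L < G.dist x w),
                ENNReal.ofReal |green Hm E x0 v|) := by
          rw [Finset.sup_eq_iSup]
          simp
        rw [he]
        rw [Finset.sup_lt_iff (by exact ENNReal.ofReal_pos.mpr h2a)]
        intro v _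
        exact hlt v
      exact absurd hMEs (not_le.mpr hfin2)
    obtain ⟨v, hvbd, hvG⟩ := hex
    have hx0v : x0 ≠ v := by
      intro hxv
      obtain ⟨w, hadj, hLw⟩ := hvbd
      rw [← hxv] at hadj
      have hxw : G.Adj x w := hadj
      have hd1 : G.dist x w = 1 := SimpleGraph.dist_eq_one_iff_adj.mpr hxw
      rw [hd1] at hLw
      omega
    -- cardinality positivity and the b*N ≤ a*c^2 bound
    have hcard : 0 < Λ.card := Finset.card_pos.mpr ⟨x, self_mem_zball G hfin x L⟩
    have hcardR : (0 : ℝ) < (Λ.card : ℝ) := by exact_mod_cast hcard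
    have hbN : b * (Fintype.card ↥Λ : ℝ) ≤ a * c ^ 2 := by
      have h1 : b ≤ ((Λ.card : ℝ))⁻¹ * a * c ^ 2 := le_trans hbmin (min_le_left _ _)
      have h2 : (Fintype.card ↥Λ : ℝ) = (Λ.card : ℝ) := by
        rw [Fintype.card_coe]
      rw [h2]
      calc b * (Λ.card : ℝ) ≤ (((Λ.card : ℝ))⁻¹ * a * c ^ 2) * (Λ.card : ℝ) :=
            mul_le_mul_of_nonneg_right h1 hcardR.le
        _ = a * c ^ 2 := by field_simp
    have hbc : b ≤ c := le_trans hbmin (min_le_right _ _)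
    have hvG' : 2 * a ≤ |(Hm - E • (1 : Matrix (↥Λ) (↥Λ) ℝ))⁻¹ x0 v| := hvG
    obtain ⟨hb12, hstab⟩ := det_core (ham_isHermitian G (fun z => V z ω) Λ)
      (ham_offdiag G (fun z => V z ω) Λ) ha hb hc hbN hspec x0 v hx0v hvG'
    -- choose a subinterval of I of length b around E
    have hEI' : E ∈ Set.Icc t₀ (t₀ + 1) := by rw [hI] at hEI; exact hEI
    obtain ⟨E₁, hsub, hclose⟩ : ∃ E₁ : ℝ, Set.Icc E₁ (E₁ + b) ⊆ I ∧
        ∀ E' ∈ Set.Icc E₁ (E₁ + b), |E' - E| ≤ b := by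
      obtain ⟨hE1, hE2⟩ := hEI'
      rcases le_or_gt E (t₀ + 1 / 2) with hEh | hEh
      · refine ⟨E, ?_, ?_⟩
        · intro y hy
          obtain ⟨hy1, hy2⟩ := hy
          rw [hI]
          exact ⟨by linarith, by linarith⟩
        · intro E' hE'
          obtain ⟨hy1, hy2⟩ := hE'
          rw [abs_le]
          constructor <;> linarith
      · refine ⟨E - b, ?_, ?_⟩
        · intro y hy
          obtain ⟨hy1, hy2⟩ := hy
          rw [hI]
          constructor <;> [linarith; linarith]
        · intro E' hE'
          obtain ⟨hy1, hy2⟩ := hE'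
          rw [abs_le]
          constructor <;> linarith
    have hJle : ∀ E' ∈ Set.Icc E₁ (E₁ + b), ENNReal.ofReal a ≤ F (ω, E') := by
      intro E' hE'
      obtain ⟨hdet', hG'⟩ := hstab E' (hclose E' hE')
      have hE'spec : E' ∉ specSet Hm := fun h => hdet' h
      have h0 : F (ω, E') =
          ⨆ (v : ↥Λ) (_ : ∃ w : Z, G.Adj (v : Z) w ∧ L < G.dist x w),
            ENNReal.ofReal |green Hm E' x0 v| := by
        show Mfn G hfin (fun z => V z ω) x L E' = _
        simp only [Mfn]
        rw [if_neg hE'spec]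
      rw [h0]
      refine le_iSup_of_le v (le_iSup_of_le hvbd ?_)
      exact ENNReal.ofReal_le_ofReal hG'
    have hmb : ENNReal.ofReal b ≤ m ω := by
      have h1 : ν (Set.Icc E₁ (E₁ + b)) = ENNReal.ofReal b := by
        rw [hν, Measure.restrict_apply measurableSet_Icc,
          Set.inter_eq_left.mpr hsub, Real.volume_Icc]
        congr 1
        ring
      calc ENNReal.ofReal b = ν (Set.Icc E₁ (E₁ + b)) := h1.symm
        _ ≤ m ω := measure_mono hJle
    exact hωB hmb
end

section
/- Let I ⊆ ℝ be an interval of length 1, B_L(x) a ball with N = |B_L(x)|, and let a, P_L > 0 be such that ℙ(M_x(E) ≥ a) ≤ P_L for every E ∈ I. Then for every b ≥ P_L there exists a measurable event 𝓑_b with ℙ(𝓑_b) ≤ b^{−1}·P_L such that for every ω ∉ 𝓑_b the set {E ∈ I : M_x(E;ω) ≥ a} is contained in a union of at most 3N² closed intervals J_1, …, J_K ⊆ ℝ whose total length satisfies Σ_{i=1}^{K} |J_i| ≤ b. -/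
/-!
Statement 8: spectral reduction, part (A) of Theorem `SW.CPT` in the paper: outside an event
of probability `b⁻¹ P_L`, the set of energies in `I` where `M_x(E) ≥ a` is covered by at
most `3N²` intervals of total length at most `b`.
-/

open Finset

open scoped ENNReal Classical

/-! ### Auxiliary lemmas -/

lemma cover_lemma (t₀ t₁ : ℝ) (FF : Finset (Polynomial ℝ)) (hFF : ∀ f ∈ FF, f ≠ 0)
    (S : Set ℝ) (hS : S = {E ∈ Set.Icc t₀ t₁ | ∃ f ∈ FF, f.eval E ≤ 0}) :
    ∃ (K : ℕ) (lo hi : Fin K → ℝ),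
      K ≤ 1 + ∑ f ∈ FF, f.natDegree ∧
      (∀ i, lo i ≤ hi i) ∧
      (∀ i, Set.Icc (lo i) (hi i) ⊆ S) ∧
      (Pairwise fun i j => Disjoint (Set.Icc (lo i) (hi i)) (Set.Icc (lo j) (hi j))) ∧
      S ⊆ ⋃ i, Set.Icc (lo i) (hi i) := by
  classical
  have hSsub : S ⊆ Set.Icc t₀ t₁ := by rw [hS]; exact fun E hE => hE.1
  have hSclosed : IsClosed S := by
    rw [hS]
    have : {E ∈ Set.Icc t₀ t₁ | ∃ f ∈ FF, f.eval E ≤ 0} =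
        Set.Icc t₀ t₁ ∩ ⋃ f ∈ FF, {E : ℝ | f.eval E ≤ 0} := by
      ext E; simp [Set.mem_setOf_eq, Set.mem_iUnion]
    rw [this]
    refine isClosed_Icc.inter (Set.Finite.isClosed_biUnion FF.finite_toSet fun f _ => ?_)
    exact isClosed_le (f.continuous_aeval.comp continuous_id |>.congr fun x => rfl) continuous_const
  -- the set of connected components of S
  set Comps : Set (Set ℝ) := {c | ∃ E ∈ S, c = connectedComponentIn S E} with hComps
  -- basic facts about each component
  have hmem : ∀ c ∈ Comps, ∀ E, E ∈ S → c = connectedComponentIn S E → True := fun _ _ _ _ _ => trivial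
  have hcomp_props : ∀ c ∈ Comps, c.Nonempty ∧ c ⊆ S ∧ IsPreconnected c ∧ IsClosed c := by
    rintro c ⟨E, hE, rfl⟩
    have hne : (connectedComponentIn S E).Nonempty := ⟨E, mem_connectedComponentIn hE⟩
    have hsub : connectedComponentIn S E ⊆ S := connectedComponentIn_subset S E
    have hpc : IsPreconnected (connectedComponentIn S E) := isPreconnected_connectedComponentIn
    have hclosure : closure (connectedComponentIn S E) ⊆ connectedComponentIn S E := by
      apply IsPreconnected.subset_connectedComponentIn hpc.closure
      · exact subset_closure (mem_connectedComponentIn hE)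
      · exact hSclosed.closure_subset_iff.mpr hsub
    exact ⟨hne, hsub, hpc, closure_subset_iff_isClosed.mp hclosure⟩
  -- each component is a closed interval [sInf c, sSup c]
  have hcomp_Icc : ∀ c ∈ Comps, sInf c ∈ c ∧ sSup c ∈ c ∧ c = Set.Icc (sInf c) (sSup c) := by
    intro c hc
    obtain ⟨hne, hsub, hpc, hcl⟩ := hcomp_props c hc
    have hcpt : IsCompact c := isCompact_Icc.of_isClosed_subset hcl (hsub.trans hSsub)
    have hInf : sInf c ∈ c := hcpt.sInf_mem hne
    have hSup : sSup c ∈ c := hcpt.sSup_mem hne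
    refine ⟨hInf, hSup, Set.Subset.antisymm ?_ ?_⟩
    · intro y hy
      exact ⟨csInf_le hcpt.bddBelow hy, le_csSup hcpt.bddAbove hy⟩
    · exact hpc.ordConnected.out hInf hSup
  -- the left endpoints lie in a finite set
  set R : Finset ℝ := insert t₀ (FF.biUnion fun f => f.roots.toFinset) with hR
  have hinf_mem : ∀ c ∈ Comps, sInf c ∈ R := by
    intro c hc
    obtain ⟨hInf, _, _⟩ := hcomp_Icc c hc
    obtain ⟨hne, hsub, hpc, hcl⟩ := hcomp_props c hc
    set m := sInf c with hm
    rcases eq_or_lt_of_le (hSsub (hsub hInf)).1 with h | h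
    · rw [hR]; exact h ▸ Finset.mem_insert_self _ _
    · -- m > t₀; find a polynomial vanishing at m
      have hmS : m ∈ S := hsub hInf
      obtain ⟨hmI, f, hfFF, hfle⟩ := by rw [hS] at hmS; exact hmS
      rcases lt_or_eq_of_le hfle with hlt | heq
      · -- f.eval m < 0: contradiction with minimality of m
        exfalso
        have hcont : Continuous fun y => f.eval y := f.continuous
        have : ∀ᶠ y in nhds m, f.eval y < 0 := hcont.continuousAt.eventually_lt continuous_const.continuousAt hlt
        obtain ⟨ε, hε, hball⟩ := Metric.eventually_nhds_iff.mp this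
        set m' := max t₀ (m - ε / 2) with hm'
        have hm'lt : m' < m := by
          apply max_lt h; linarith
        have hm'I : Set.Icc m' m ⊆ S := by
          intro y hy
          rw [hS]
          refine ⟨⟨le_trans (le_max_left _ _) hy.1, le_trans hy.2 hmI.2⟩, f, hfFF, le_of_lt ?_⟩
          apply hball
          rw [Real.dist_eq, abs_lt]
          have h1 : m - ε / 2 ≤ m' := le_max_right _ _
          have h2 := hy.1
          have h3 := hy.2
          constructor <;> nlinarith
        have hIccc : Set.Icc m' m ⊆ c := by
          rcases hc with ⟨E, hE, rfl⟩
          have : connectedComponentIn S E = connectedComponentIn S m :=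
            connectedComponentIn_eq hInf
          rw [this]
          exact IsPreconnected.subset_connectedComponentIn isPreconnected_Icc
            (Set.right_mem_Icc.mpr hm'lt.le) hm'I
        have : m ≤ m' := csInf_le (isCompact_Icc.of_isClosed_subset hcl (hsub.trans hSsub)).bddBelow
          (hIccc (Set.left_mem_Icc.mpr hm'lt.le))
        exact absurd this (not_le.mpr hm'lt)
      · rw [hR]
        refine Finset.mem_insert_of_mem (Finset.mem_biUnion.mpr ⟨f, hfFF, ?_⟩)
        rw [Multiset.mem_toFinset, Polynomial.mem_roots (hFF f hfFF)]
        exact heq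
  -- components are pairwise disjoint / equal
  have hcomp_eq_or_disj : ∀ c ∈ Comps, ∀ c' ∈ Comps, (c ∩ c').Nonempty → c = c' := by
    rintro c hc c' hc' hcc
    obtain ⟨E, hE, rfl⟩ := hc
    obtain ⟨E', hE', rfl⟩ := hc'
    obtain ⟨y, hy, hy'⟩ := hcc
    rw [connectedComponentIn_eq hy, connectedComponentIn_eq hy']
  -- finiteness via injection of sInf into R
  have hinj : Set.InjOn sInf Comps := by
    intro c hc c' hc' heq
    apply hcomp_eq_or_disj c hc c' hc'
    refine ⟨sInf c, (hcomp_Icc c hc).1, ?_⟩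
    rw [heq]; exact (hcomp_Icc c' hc').1
  have hfin : Comps.Finite := Set.Finite.of_finite_image
    (Set.Finite.subset R.finite_toSet (by rintro _ ⟨c, hc, rfl⟩; exact hinf_mem c hc)) hinj
  -- enumerate components
  set K := hfin.toFinset.card with hK
  have hcard : K ≤ R.card := by
    rw [hK]
    have := Finset.card_le_card_of_injOn sInf
      (fun c hc => hinf_mem c (hfin.mem_toFinset.mp hc))
      (fun c hc c' hc' => hinj (hfin.mem_toFinset.mp hc) (hfin.mem_toFinset.mp hc'))
    exact this
  have hRcard : R.card ≤ 1 + ∑ f ∈ FF, f.natDegree := by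
    rw [hR]
    refine le_trans (Finset.card_insert_le _ _) ?_
    have h2 : (FF.biUnion fun f => f.roots.toFinset).card ≤ ∑ f ∈ FF, f.natDegree := by
      refine le_trans Finset.card_biUnion_le (Finset.sum_le_sum fun f hf => ?_)
      exact le_trans (Multiset.toFinset_card_le _) f.card_roots'
    omega
  obtain ⟨e⟩ : Nonempty (Fin K ≃ hfin.toFinset) := ⟨(hfin.toFinset.equivFin).symm⟩
  refine ⟨K, fun i => sInf (e i : Set ℝ), fun i => sSup (e i : Set ℝ), le_trans hcard hRcard, ?_, ?_, ?_, ?_⟩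
  · intro i
    have hc := hfin.mem_toFinset.mp (e i).2
    obtain ⟨hInf, hSup, _⟩ := hcomp_Icc _ hc
    obtain ⟨hne, hsub, hpc, hcl⟩ := hcomp_props _ hc
    have hcpt : IsCompact (e i : Set ℝ) := isCompact_Icc.of_isClosed_subset hcl (hsub.trans hSsub)
    exact csInf_le_csSup hne hcpt.bddBelow hcpt.bddAbove
  · intro i
    have hc := hfin.mem_toFinset.mp (e i).2
    obtain ⟨_, hsub, _, _⟩ := hcomp_props _ hc
    obtain ⟨_, _, hIcc⟩ := hcomp_Icc _ hc
    rw [← hIcc]; exact hsub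
  · intro i j hij
    have hci := hfin.mem_toFinset.mp (e i).2
    have hcj := hfin.mem_toFinset.mp (e j).2
    obtain ⟨_, _, hIcci⟩ := hcomp_Icc _ hci
    obtain ⟨_, _, hIccj⟩ := hcomp_Icc _ hcj
    rw [← hIcci, ← hIccj]
    rw [Set.disjoint_iff_inter_eq_empty]
    by_contra hne
    have : (e i : Set ℝ) = (e j : Set ℝ) :=
      hcomp_eq_or_disj _ hci _ hcj (Set.nonempty_iff_ne_empty.mpr hne)
    exact hij (e.injective (Subtype.ext this))
  · intro E hE
    have hcmem : connectedComponentIn S E ∈ Comps := ⟨E, hE, rfl⟩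
    obtain ⟨i, hi⟩ : ∃ i, (e i : Set ℝ) = connectedComponentIn S E := by
      obtain ⟨c, hc⟩ := e.surjective ⟨_, hfin.mem_toFinset.mpr hcmem⟩
      exact ⟨c, by rw [hc]⟩
    refine Set.mem_iUnion.mpr ⟨i, ?_⟩
    obtain ⟨_, _, hIcc⟩ := hcomp_Icc _ (hfin.mem_toFinset.mp (e i).2)
    rw [← hIcc, hi]
    exact mem_connectedComponentIn hE

lemma natDegree_det_le' {n : Type*} [Fintype n] [DecidableEq n]
    (M : Matrix n n (Polynomial ℝ)) (b : n → ℕ)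
    (h : ∀ i j, (M i j).natDegree ≤ b i) : M.det.natDegree ≤ ∑ i, b i := by
  rw [Matrix.det_apply']
  refine Polynomial.natDegree_sum_le_of_forall_le _ _ fun σ _ => ?_
  refine le_trans Polynomial.natDegree_mul_le ?_
  rw [Polynomial.natDegree_intCast, zero_add]
  refine le_trans (Polynomial.natDegree_prod_le Finset.univ _) ?_
  calc ∑ i, (M (σ i) i).natDegree ≤ ∑ i, b (σ i) := Finset.sum_le_sum fun i _ => h (σ i) i
    _ = ∑ i, b i := Equiv.sum_comp σ b

lemma key_alg {n : Type*} [Fintype n] [DecidableEq n] (M0 : Matrix n n ℝ) (x0 : n)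
    (P : n → Prop) [DecidablePred P] (hPx : ¬ P x0) (a : ℝ) (ha : 0 < a) :
    ∃ FF : Finset (Polynomial ℝ),
      (∀ f ∈ FF, f ≠ 0) ∧
      FF.card ≤ Fintype.card n ∧
      (∀ f ∈ FF, f.natDegree ≤ 2 * Fintype.card n) ∧
      ∀ E : ℝ,
        ((E ∈ specSet M0) ∨ ∃ v, P v ∧ a ≤ |green M0 E x0 v|) ↔ ∃ f ∈ FF, f.eval E ≤ 0 := by
  classical
  have hnone : Nonempty n := ⟨x0⟩
  set N := Fintype.card n with hN
  have hN1 : 1 ≤ N := Fintype.card_pos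
  set A : Matrix n n (Polynomial ℝ) := -(Matrix.charmatrix M0) with hA
  have hmapA : ∀ E : ℝ, A.map (Polynomial.eval E) = M0 - E • (1 : Matrix n n ℝ) := by
    intro E; ext i j
    by_cases h : i = j
    · subst h
      simp [hA, Matrix.map_apply, Matrix.sub_apply, Matrix.smul_apply, Matrix.one_apply]
    · simp [hA, Matrix.map_apply, Matrix.sub_apply, Matrix.smul_apply, Matrix.one_apply,
        Matrix.charmatrix_apply_ne _ _ _ h, if_neg h]
  have hmapA' : ∀ E : ℝ, A.map (Polynomial.evalRingHom E) = M0 - E • (1 : Matrix n n ℝ) :=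
    fun E => hmapA E
  have hdetsq : ∀ E : ℝ, ((M0.charpoly).eval E)^2 = ((M0 - E • (1 : Matrix n n ℝ)).det)^2 := by
    intro E
    have h1 : (M0.charpoly).eval E = ((Matrix.charmatrix M0).map (Polynomial.evalRingHom E)).det := by
      rw [Matrix.charpoly, ← RingHom.mapMatrix_apply, ← RingHom.map_det]
      rfl
    have h2 : (Matrix.charmatrix M0).map (Polynomial.evalRingHom E) =
        -(M0 - E • (1 : Matrix n n ℝ)) := by
      rw [← hmapA' E, hA]
      ext i j
      simp [Matrix.map_apply]
    rw [h1, h2, Matrix.det_neg]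
    rw [mul_pow, ← pow_mul, mul_comm N 2, pow_mul, neg_one_sq, one_pow, one_mul]
  set g : n → Polynomial ℝ := fun v => A.adjugate x0 v with hgdef
  have hg : ∀ (E : ℝ) (v : n), (g v).eval E = (M0 - E • (1 : Matrix n n ℝ)).adjugate x0 v := by
    intro E v
    have := (Polynomial.evalRingHom E).map_adjugate A
    have h2 : ((Polynomial.evalRingHom E).mapMatrix A.adjugate) x0 v =
        (Matrix.adjugate ((Polynomial.evalRingHom E).mapMatrix A)) x0 v := by rw [this]
    simpa [RingHom.mapMatrix_apply, Matrix.map_apply, Polynomial.coe_evalRingHom,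
      hmapA E] using h2
  -- degree bounds
  have hAdeg : ∀ i j, (A i j).natDegree ≤ 1 := by
    intro i j
    by_cases h : i = j
    · subst h
      simp only [hA, Matrix.neg_apply, Matrix.charmatrix_apply_eq]
      rw [Polynomial.natDegree_neg]
      exact le_of_eq (Polynomial.natDegree_X_sub_C _)
    · simp [hA, Matrix.charmatrix_apply_ne _ _ _ h, Polynomial.natDegree_C]
  have hgdeg : ∀ v, v ≠ x0 → (g v).natDegree ≤ N - 1 := by
    intro v hv
    rw [hgdef]
    simp only
    rw [Matrix.adjugate_apply]
    have hbd : ∀ i j, ((A.updateRow v (Pi.single x0 1)) i j).natDegree ≤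
        (fun i => if i = v then 0 else 1) i := by
      intro i j
      by_cases h : i = v
      · subst h
        rw [Matrix.updateRow_self]
        simp only [if_pos rfl]
        by_cases h2 : j = x0
        · subst h2; simp [Pi.single_eq_same]
        · simp [Pi.single_eq_of_ne h2]
      · rw [Matrix.updateRow_ne h]
        simp only [if_neg h]
        exact hAdeg i j
    refine le_trans (natDegree_det_le' _ _ hbd) ?_
    rw [← Finset.sum_erase_add Finset.univ _ (Finset.mem_univ v)]
    simp only [if_pos rfl, add_zero]
    have : ∀ i ∈ Finset.univ.erase v, (if i = v then 0 else 1) = 1 := by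
      intro i hi
      rw [if_neg (Finset.mem_erase.mp hi).1]
    rw [Finset.sum_congr rfl this, Finset.sum_const, smul_eq_mul, mul_one,
      Finset.card_erase_of_mem (Finset.mem_univ v), Finset.card_univ]
    simp [hN]
  set pv : n → Polynomial ℝ := fun v => Polynomial.C (a^2) * M0.charpoly^2 - (g v)^2 with hpvdef
  have hchm : (M0.charpoly^2).Monic := (Matrix.charpoly_monic M0).pow 2
  have hchdeg : (M0.charpoly^2).natDegree = 2 * N := by
    rw [Polynomial.natDegree_pow, Matrix.charpoly_natDegree_eq_dim, mul_comm]
  have hpvne : ∀ v, v ≠ x0 → pv v ≠ 0 := by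
    intro v hv hzero
    have hc : (pv v).coeff (2 * N) = a^2 := by
      rw [hpvdef]
      simp only
      rw [Polynomial.coeff_sub, Polynomial.coeff_C_mul]
      have h1 : (M0.charpoly^2).coeff (2*N) = 1 := by
        rw [← hchdeg]; exact hchm.coeff_natDegree
      have h2 : ((g v)^2).coeff (2*N) = 0 := by
        apply Polynomial.coeff_eq_zero_of_natDegree_lt
        rw [Polynomial.natDegree_pow]
        have h3 := hgdeg v hv
        omega
      rw [h1, h2, mul_one, sub_zero]
    rw [hzero] at hc
    simp only [Polynomial.coeff_zero] at hc
    exact absurd hc.symm (ne_of_gt (by positivity))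
  have hpvdeg : ∀ v, v ≠ x0 → (pv v).natDegree ≤ 2 * N := by
    intro v hv
    rw [hpvdef]
    refine le_trans (Polynomial.natDegree_sub_le _ _) (max_le ?_ ?_)
    · refine le_trans Polynomial.natDegree_mul_le ?_
      rw [Polynomial.natDegree_C, zero_add, hchdeg]
    · rw [Polynomial.natDegree_pow]
      calc 2 * (g v).natDegree ≤ 2 * (N - 1) := Nat.mul_le_mul_left 2 (hgdeg v hv)
        _ ≤ 2 * N := by omega
  set FF : Finset (Polynomial ℝ) :=
    insert (M0.charpoly^2) ((Finset.univ.filter P).image pv) with hFFdef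
  have hvne : ∀ v ∈ Finset.univ.filter P, v ≠ x0 := by
    intro v hv
    rcases Finset.mem_filter.mp hv with ⟨_, hPv⟩
    exact fun h => hPx (h ▸ hPv)
  refine ⟨FF, ?_, ?_, ?_, ?_⟩
  · intro f hf
    rcases Finset.mem_insert.mp hf with rfl | hf
    · exact hchm.ne_zero
    · rcases Finset.mem_image.mp hf with ⟨v, hv, rfl⟩
      exact hpvne v (hvne v hv)
  · refine le_trans (Finset.card_insert_le _ _) ?_
    have h1 : ((Finset.univ.filter P).image pv).card ≤ (Finset.univ.filter P).card :=
      Finset.card_image_le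
    have h2 : (Finset.univ.filter P) ⊆ Finset.univ.erase x0 := by
      intro v hv
      exact Finset.mem_erase.mpr ⟨hvne v hv, Finset.mem_univ v⟩
    have h3 := Finset.card_le_card h2
    rw [Finset.card_erase_of_mem (Finset.mem_univ x0), Finset.card_univ] at h3
    omega
  · intro f hf
    rcases Finset.mem_insert.mp hf with rfl | hf
    · exact le_of_eq hchdeg
    · rcases Finset.mem_image.mp hf with ⟨v, hv, rfl⟩
      exact hpvdeg v (hvne v hv)
  · intro E
    set d : ℝ := (M0 - E • (1 : Matrix n n ℝ)).det with hd
    have hchev : (M0.charpoly^2).eval E = d^2 := by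
      rw [Polynomial.eval_pow, hdetsq E]
    have hpvev : ∀ v, (pv v).eval E =
        a^2 * d^2 - ((M0 - E • (1 : Matrix n n ℝ)).adjugate x0 v)^2 := by
      intro v
      rw [hpvdef]
      simp only [Polynomial.eval_sub, Polynomial.eval_mul, Polynomial.eval_C,
        Polynomial.eval_pow]
      rw [hdetsq E, hg E v]
    have hspec : E ∈ specSet M0 ↔ d = 0 := Iff.rfl
    constructor
    · rintro (hE | ⟨v, hPv, hav⟩)
      · refine ⟨M0.charpoly^2, Finset.mem_insert_self _ _, ?_⟩
        rw [hchev, hspec.mp hE]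
        simp
      · by_cases hd0 : d = 0
        · refine ⟨M0.charpoly^2, Finset.mem_insert_self _ _, ?_⟩
          rw [hchev, hd0]; simp
        · refine ⟨pv v, Finset.mem_insert_of_mem
            (Finset.mem_image_of_mem pv (Finset.mem_filter.mpr ⟨Finset.mem_univ v, hPv⟩)), ?_⟩
          rw [hpvev v, sub_nonpos]
          set adjE := (M0 - E • (1 : Matrix n n ℝ)).adjugate x0 v with hadjE
          have hgreen : green M0 E x0 v = d⁻¹ * adjE := by
            rw [green, Matrix.inv_def, Ring.inverse_eq_inv, Matrix.smul_apply, smul_eq_mul]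
          rw [hgreen, abs_mul, abs_inv] at hav
          have h3 : a * |d| ≤ |adjE| := by
            rw [inv_mul_eq_div, le_div_iff₀ (abs_pos.mpr hd0)] at hav
            linarith [hav]
          calc a^2 * d^2 = (a * |d|)^2 := by rw [mul_pow, sq_abs]
            _ ≤ |adjE|^2 := pow_le_pow_left₀ (by positivity) h3 2
            _ = adjE^2 := sq_abs _
    · rintro ⟨f, hf, hfe⟩
      rcases Finset.mem_insert.mp hf with rfl | hf
      · left
        rw [hchev] at hfe
        have : d^2 = 0 := le_antisymm hfe (sq_nonneg d)
        exact hspec.mpr (pow_eq_zero_iff two_ne_zero |>.mp this)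
      · rcases Finset.mem_image.mp hf with ⟨v, hv, rfl⟩
        by_cases hd0 : d = 0
        · exact Or.inl (hspec.mpr hd0)
        · right
          refine ⟨v, (Finset.mem_filter.mp hv).2, ?_⟩
          rw [hpvev v, sub_nonpos] at hfe
          set adjE := (M0 - E • (1 : Matrix n n ℝ)).adjugate x0 v with hadjE
          have hgreen : green M0 E x0 v = d⁻¹ * adjE := by
            rw [green, Matrix.inv_def, Ring.inverse_eq_inv, Matrix.smul_apply, smul_eq_mul]
          rw [hgreen, abs_mul, abs_inv, inv_mul_eq_div, le_div_iff₀ (abs_pos.mpr hd0)]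
          have : (a * |d|)^2 ≤ |adjE|^2 := by
            rw [mul_pow, sq_abs, sq_abs]; exact hfe
          exact (pow_le_pow_iff_left₀ (by positivity) (abs_nonneg _) two_ne_zero).mp this


open MeasureTheory

theorem statement8 {Z : Type*} [DecidableEq Z] (G : SimpleGraph Z) [DecidableRel G.Adj]
    [∀ v : Z, Fintype (G.neighborSet v)]
    (hconn : G.Connected) (hcount : Countable Z)
    (hfin : ∀ (x : Z) (r : ℕ), {y : Z | G.dist x y ≤ r}.Finite)
    {Ω : Type*} [MeasurableSpace Ω] (Pr : Measure Ω) [IsProbabilityMeasure Pr]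
    (V : Z → Ω → ℝ)
    (I : Set ℝ) (t₀ : ℝ) (hI : I = Set.Icc t₀ (t₀ + 1))
    (x : Z) (L : ℕ) (hL : 1 ≤ L)
    -- joint measurability of `(ω, E) ↦ M_x(E; ω)`
    (hmeas : Measurable fun p : Ω × ℝ => Mfn G hfin (fun z => V z p.1) x L p.2)
    (a PL : ℝ) (ha : 0 < a) (hPL : 0 < PL)
    -- fixed-energy bound: for every `E ∈ I`, `Pr(M_x(E) ≥ a) ≤ P_L`
    (hfixed : ∀ E ∈ I,
      Pr {ω | ENNReal.ofReal a ≤ Mfn G hfin (fun z => V z ω) x L E} ≤ ENNReal.ofReal PL) :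
    ∀ b : ℝ, PL ≤ b →
      ∃ B : Set Ω, MeasurableSet B ∧ Pr B ≤ ENNReal.ofReal (b⁻¹ * PL) ∧
        ∀ ω ∉ B, ∃ (K : ℕ) (lo hi : Fin K → ℝ),
          K ≤ 3 * (zball G hfin x L).card ^ 2 ∧
          (∀ i, lo i ≤ hi i) ∧
          (∑ i, (hi i - lo i)) ≤ b ∧
          {E ∈ I | ENNReal.ofReal a ≤ Mfn G hfin (fun z => V z ω) x L E} ⊆
            ⋃ i, Set.Icc (lo i) (hi i) := by
  intro b hb
  classical
  have hb0 : 0 < b := lt_of_lt_of_le hPL hb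
  -- the jointly measurable set of pairs (ω, E)
  set s : Set (Ω × ℝ) := (Prod.snd ⁻¹' I) ∩
    ((fun p : Ω × ℝ => Mfn G hfin (fun z => V z p.1) x L p.2) ⁻¹'
      Set.Ici (ENNReal.ofReal a)) with hsdef
  have hs : MeasurableSet s := by
    refine MeasurableSet.inter ?_ (hmeas measurableSet_Ici)
    exact measurable_snd (by rw [hI]; exact measurableSet_Icc)
  have hslice : ∀ ω : Ω, Prod.mk ω ⁻¹' s =
      {E ∈ I | ENNReal.ofReal a ≤ Mfn G hfin (fun z => V z ω) x L E} := by
    intro ω; ext E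
    simp [hsdef, Set.mem_setOf_eq]
  set F : Ω → ℝ≥0∞ := fun ω => volume (Prod.mk ω ⁻¹' s) with hFdef
  have hF : Measurable F := measurable_measure_prodMk_left hs
  have hint : ∫⁻ ω, F ω ∂Pr ≤ ENNReal.ofReal PL := by
    rw [hFdef]
    simp only
    rw [← Measure.prod_apply hs, Measure.prod_apply_symm hs]
    have hbound : ∀ E : ℝ, Pr ((fun ω => (ω, E)) ⁻¹' s) ≤
        Set.indicator I (fun _ => ENNReal.ofReal PL) E := by
      intro E
      by_cases hEI : E ∈ I
      · rw [Set.indicator_of_mem hEI]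
        refine le_trans (measure_mono ?_) (hfixed E hEI)
        intro ω hω
        exact hω.2
      · rw [Set.indicator_of_notMem hEI]
        have hempty : (fun ω : Ω => (ω, E)) ⁻¹' s = ∅ := by
          ext ω; simp [hsdef, hEI]
        simp [hempty]
    refine le_trans (lintegral_mono hbound) ?_
    rw [lintegral_indicator (by rw [hI]; exact measurableSet_Icc), setLIntegral_const,
      hI, Real.volume_Icc]
    simp
  set B : Set Ω := F ⁻¹' Set.Ioi (ENNReal.ofReal b) with hBdef
  have hBmeas : MeasurableSet B := hF measurableSet_Ioi
  have hPrB : Pr B ≤ ENNReal.ofReal (b⁻¹ * PL) := by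
    have h5 : ENNReal.ofReal b * Pr {ω | ENNReal.ofReal b ≤ F ω} ≤ ENNReal.ofReal PL :=
      le_trans (mul_meas_ge_le_lintegral₀ hF.aemeasurable _) hint
    have h6 : Pr B ≤ Pr {ω | ENNReal.ofReal b ≤ F ω} :=
      measure_mono fun ω hω => show ENNReal.ofReal b ≤ F ω from le_of_lt hω
    have h7 : Pr {ω | ENNReal.ofReal b ≤ F ω} ≤ ENNReal.ofReal PL / ENNReal.ofReal b := by
      rw [ENNReal.le_div_iff_mul_le
        (Or.inl (by simp only [ne_eq, ENNReal.ofReal_eq_zero, not_le]; linarith))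
        (Or.inl ENNReal.ofReal_ne_top), mul_comm]
      exact h5
    refine le_trans h6 (le_trans h7 ?_)
    rw [inv_mul_eq_div, ENNReal.ofReal_div_of_pos hb0]
  refine ⟨B, hBmeas, hPrB, ?_⟩
  intro ω hω
  have hvol : volume {E ∈ I | ENNReal.ofReal a ≤ Mfn G hfin (fun z => V z ω) x L E} ≤
      ENNReal.ofReal b := by
    rw [← hslice ω]
    exact not_lt.mp hω
  -- deterministic covering for the fixed good ω
  set Λ := zball G hfin x L with hΛ
  set M0 := Ham G (fun z => V z ω) Λ with hM0
  set x0 : ↥Λ := ⟨x, self_mem_zball G hfin x L⟩ with hx0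
  set P : ↥Λ → Prop := fun v => ∃ w : Z, G.Adj (v : Z) w ∧ L < G.dist x w with hP
  have hnonempty : Nonempty ↥Λ := ⟨x0⟩
  have hPx : ¬ P x0 := by
    rintro ⟨w, hadj, hdist⟩
    have hx0c : (x0 : Z) = x := rfl
    rw [hx0c] at hadj
    have h1 : G.dist x w = 1 := SimpleGraph.dist_eq_one_iff_adj.mpr hadj
    omega
  obtain ⟨FF, hFFne, hFFcard, hFFdeg, hFFiff⟩ := key_alg M0 x0 P hPx a ha
  have hMfn : ∀ E : ℝ, (ENNReal.ofReal a ≤ Mfn G hfin (fun z => V z ω) x L E) ↔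
      (E ∈ specSet M0 ∨ ∃ v, P v ∧ a ≤ |green M0 E x0 v|) := by
    intro E
    by_cases hspec : E ∈ specSet M0
    · have hunfold : Mfn G hfin (fun z => V z ω) x L E = ⊤ := by
        simp only [Mfn, ← hΛ, ← hM0]
        rw [if_pos hspec]
      rw [hunfold]
      exact ⟨fun _ => Or.inl hspec, fun _ => le_top⟩
    · have hunfold : Mfn G hfin (fun z => V z ω) x L E =
          ⨆ (v : ↥Λ) (_ : P v), ENNReal.ofReal |green M0 E x0 v| := by
        simp only [Mfn, ← hΛ, ← hM0, ← hx0, ← hP]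
        rw [if_neg hspec]
      rw [hunfold]
      have h1 : (⨆ (v : ↥Λ) (_ : P v), ENNReal.ofReal |green M0 E x0 v|) =
          Finset.sup Finset.univ
            (fun v => if P v then ENNReal.ofReal |green M0 E x0 v| else ⊥) := by
        rw [Finset.sup_univ_eq_iSup]
        refine iSup_congr fun v => ?_
        by_cases h : P v
        · rw [if_pos h]; exact iSup_pos h
        · rw [if_neg h]; exact iSup_neg h
      rw [h1, Finset.le_sup_iff
        (show (⊥ : ℝ≥0∞) < ENNReal.ofReal a by
          simpa using ENNReal.ofReal_pos.mpr ha)]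
      constructor
      · rintro ⟨v, -, hv⟩
        by_cases h : P v
        · rw [if_pos h] at hv
          exact Or.inr ⟨v, h, (ENNReal.ofReal_le_ofReal_iff (abs_nonneg _)).mp hv⟩
        · rw [if_neg h] at hv
          exact absurd (ENNReal.ofReal_eq_zero.mp (le_bot_iff.mp hv)) (not_le.mpr ha)
      · rintro (h | ⟨v, hPv, hv⟩)
        · exact absurd h hspec
        · exact ⟨v, Finset.mem_univ v, by
            rw [if_pos hPv]
            exact (ENNReal.ofReal_le_ofReal_iff (abs_nonneg _)).mpr hv⟩
  have hSeq : {E ∈ I | ENNReal.ofReal a ≤ Mfn G hfin (fun z => V z ω) x L E} =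
      {E ∈ Set.Icc t₀ (t₀ + 1) | ∃ f ∈ FF, f.eval E ≤ 0} := by
    ext E
    rw [hI]
    simp only [Set.mem_setOf_eq]
    exact and_congr_right fun _ => (hMfn E).trans (hFFiff E)
  obtain ⟨K, lo, hi, hK, hle, hIccsub, hdisj, hcover⟩ :=
    cover_lemma t₀ (t₀ + 1) FF hFFne _ hSeq
  refine ⟨K, lo, hi, ?_, hle, ?_, hcover⟩
  · -- counting
    have hN1 : 1 ≤ Fintype.card ↥Λ := Fintype.card_pos
    have hcoe : Fintype.card ↥Λ = Λ.card := Fintype.card_coe Λ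
    set N := Λ.card with hNdef
    have hN1' : 1 ≤ N := by omega
    have hsum : ∑ f ∈ FF, f.natDegree ≤ FF.card * (2 * N) := by
      calc ∑ f ∈ FF, f.natDegree ≤ FF.card • (2 * Fintype.card ↥Λ) :=
            Finset.sum_le_card_nsmul _ _ _ hFFdeg
        _ = FF.card * (2 * N) := by rw [smul_eq_mul, hcoe]
    have hcard : FF.card ≤ N := by omega
    have h2 : K ≤ 1 + N * (2 * N) := by
      refine le_trans hK ?_
      have := Nat.mul_le_mul_right (2 * N) hcard
      omega
    have h3 : 1 ≤ N * N := Nat.mul_le_mul hN1' hN1'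
    calc K ≤ 1 + N * (2 * N) := h2
      _ ≤ 3 * N ^ 2 := by nlinarith
  · -- total length
    have h1 : ∑ i, volume (Set.Icc (lo i) (hi i)) =
        volume (⋃ i, Set.Icc (lo i) (hi i)) := by
      rw [measure_iUnion hdisj fun i => measurableSet_Icc, tsum_fintype]
    have h2 : volume (⋃ i, Set.Icc (lo i) (hi i)) ≤ ENNReal.ofReal b := by
      refine le_trans (measure_mono (Set.iUnion_subset fun i => hIccsub i)) hvol
    have h3 : ∑ i, ENNReal.ofReal (hi i - lo i) ≤ ENNReal.ofReal b := by
      calc ∑ i, ENNReal.ofReal (hi i - lo i) = ∑ i, volume (Set.Icc (lo i) (hi i)) := by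
            refine Finset.sum_congr rfl fun i _ => ?_
            rw [Real.volume_Icc]
        _ = volume (⋃ i, Set.Icc (lo i) (hi i)) := h1
        _ ≤ ENNReal.ofReal b := h2
    rw [← ENNReal.ofReal_sum_of_nonneg (fun i _ => sub_nonneg.mpr (hle i))] at h3
    exact (ENNReal.ofReal_le_ofReal_iff hb0.le).mp h3
end

section
/- Fix an integer L ≥ 1, m > 0, an interval I ⊆ ℝ, and ζ(L) > 0, and assume that for every pair of disjoint balls B_L(x), B_L(y) one has ℙ(∃ E ∈ I : both B_L(x) and B_L(y) are (E,m)-S) ≤ ζ(L). Then for any x, y ∈ 𝒵 with d(x,y) > 2L+1, any finite connected subgraph 𝒢 ⊆ 𝒵 with 𝒢 ⊇ B_L(x) ∪ B_L(y), and any Borel function φ : ℝ → ℂ with |φ| ≤ 1 and φ = 0 outside I, one has 𝔼[ |⟨δ_x, φ(H_𝒢(ω)) δ_y⟩| ] ≤ 4·exp(−mL) + ζ(L). -/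
/-!
Statement 11: from variable-energy two-volume bounds to eigenfunction-correlator bounds in
finite volumes (Theorem `GK` in the paper, the finite-volume Germinet–Klein argument).
-/

open Finset

lemma Ham_isHermitian {Z : Type*} [DecidableEq Z] (G : SimpleGraph Z) [DecidableRel G.Adj]
    [∀ v : Z, Fintype (G.neighborSet v)] (V : Z → ℝ) (Λ : Finset Z) :
    (Ham G V Λ).IsHermitian := by
  unfold Matrix.IsHermitian
  ext x y
  simp only [Matrix.conjTranspose_apply, Ham, star_trivial]
  by_cases h : (x : Z) = (y : Z)
  · simp only [h, if_true, eq_self_iff_true]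
    have hd : G.degree (y : Z) = G.degree (x : Z) := congrArg (fun v : Z => G.degree v) h.symm
    have hv : V (y : Z) = V (x : Z) := congrArg V h.symm
    rw [hd]
  · have h' : ¬ (y : Z) = (x : Z) := fun hh => h hh.symm
    rw [if_neg h, if_neg h', if_congr (G.adj_comm (y : Z) (x : Z)) rfl rfl]

/-- Borel functional calculus `φ(H)` of a Hermitian matrix, via its eigendecomposition:
`φ(H)(i,j) = Σ_k φ(λ_k) ψ_k(i) ψ_k(j)*`. -/
noncomputable def matFun {n : Type*} [Fintype n] [DecidableEq n] (H : Matrix n n ℝ)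
    (hH : H.IsHermitian) (φ : ℝ → ℂ) : Matrix n n ℂ := fun i j =>
  ∑ k, φ (hH.eigenvalues k) * ((hH.eigenvectorBasis k i : ℝ) : ℂ) *
    star ((hH.eigenvectorBasis k j : ℝ) : ℂ)

open MeasureTheory Matrix

/- ### Auxiliary lemmas -/

lemma mem_zball_iff {Z : Type*} (G : SimpleGraph Z)
    (hfin : ∀ (x : Z) (r : ℕ), {y : Z | G.dist x y ≤ r}.Finite)
    (x z : Z) (r : ℕ) : z ∈ zball G hfin x r ↔ G.dist x z ≤ r := by
  simp [zball, Set.Finite.mem_toFinset]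

lemma coe_sum_eq {α M : Type*} [AddCommMonoid M] (s : Finset α) (f : ↥s → M) (g : α → M)
    (h : ∀ x : ↥s, f x = g ↑x) : ∑ x : ↥s, f x = ∑ x ∈ s, g x := by
  rw [← Finset.sum_coe_sort s g]
  exact Finset.sum_congr rfl fun x _ => h x

lemma ham_row_sum {Z : Type*} [DecidableEq Z] (G : SimpleGraph Z) [DecidableRel G.Adj]
    (s : Finset Z) (Ψ : Z → ℝ) (w : Z) (a : ℝ) :
    ∑ z ∈ s, ((if w = z then a else 0) - (if G.Adj w z then (1:ℝ) else 0)) * Ψ z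
      = (if w ∈ s then a * Ψ w else 0) - ∑ z ∈ s, (if G.Adj w z then (1:ℝ) else 0) * Ψ z := by
  simp only [sub_mul, Finset.sum_sub_distrib]
  congr 1
  simp only [ite_mul, zero_mul]
  exact Finset.sum_ite_eq s w (fun z => a * Ψ z)

/-- Row orthonormality of the eigenvector basis of a Hermitian matrix. -/
lemma sum_row_sq {n : Type*} [Fintype n] [DecidableEq n] {H : Matrix n n ℝ}
    (hH : H.IsHermitian) (i : n) :
    ∑ k, (hH.eigenvectorBasis k i) ^ 2 = 1 := by
  have h := hH.eigenvectorBasis.sum_inner_mul_inner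
      (EuclideanSpace.single i (1:ℝ)) (EuclideanSpace.single i (1:ℝ))
  simp only [EuclideanSpace.inner_single_left, EuclideanSpace.inner_single_right,
    _root_.map_one, one_mul, starRingEnd_apply, star_trivial] at h
  rw [EuclideanSpace.single_apply] at h
  simpa [sq] using h

lemma corr_le_one {n : Type*} [Fintype n] [DecidableEq n] {H : Matrix n n ℝ}
    (hH : H.IsHermitian) (i j : n) :
    ∑ k, |hH.eigenvectorBasis k i| * |hH.eigenvectorBasis k j| ≤ 1 := by
  have h2 := Finset.sum_mul_sq_le_sq_mul_sq Finset.univ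
    (fun k => |hH.eigenvectorBasis k i|) (fun k => |hH.eigenvectorBasis k j|)
  have hi := sum_row_sq hH i
  have hj := sum_row_sq hH j
  have hii : ∑ k, |hH.eigenvectorBasis k i| ^ 2 = 1 := by simpa [sq_abs] using hi
  have hjj : ∑ k, |hH.eigenvectorBasis k j| ^ 2 = 1 := by simpa [sq_abs] using hj
  have hnn : (0:ℝ) ≤ ∑ k, |hH.eigenvectorBasis k i| * |hH.eigenvectorBasis k j| :=
    Finset.sum_nonneg fun k _ => mul_nonneg (abs_nonneg _) (abs_nonneg _)
  nlinarith [h2]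

lemma matFun_bound {n : Type*} [Fintype n] [DecidableEq n] {H : Matrix n n ℝ}
    (hH : H.IsHermitian) (φ : ℝ → ℂ) (I : Set ℝ) [DecidablePred (· ∈ I)]
    (hφ1 : ∀ t : ℝ, ‖φ t‖ ≤ 1) (hφI : ∀ t : ℝ, t ∉ I → φ t = 0) (i j : n) :
    ‖matFun H hH φ i j‖ ≤ ∑ k ∈ Finset.univ.filter (fun k => hH.eigenvalues k ∈ I),
      |hH.eigenvectorBasis k i| * |hH.eigenvectorBasis k j| := by
  calc ‖matFun H hH φ i j‖
      ≤ ∑ k, ‖φ (hH.eigenvalues k) * ((hH.eigenvectorBasis k i : ℝ) : ℂ) *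
          star ((hH.eigenvectorBasis k j : ℝ) : ℂ)‖ := norm_sum_le _ _
    _ = ∑ k, ‖φ (hH.eigenvalues k)‖ * (|hH.eigenvectorBasis k i| * |hH.eigenvectorBasis k j|) := by
        refine Finset.sum_congr rfl fun k _ => ?_
        rw [norm_mul, norm_mul, norm_star, Complex.norm_real, Complex.norm_real,
          Real.norm_eq_abs, Real.norm_eq_abs, mul_assoc]
    _ ≤ ∑ k, (if hH.eigenvalues k ∈ I then
          |hH.eigenvectorBasis k i| * |hH.eigenvectorBasis k j| else 0) := by
        refine Finset.sum_le_sum fun k _ => ?_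
        split_ifs with h
        · exact mul_le_of_le_one_left
            (mul_nonneg (abs_nonneg _) (abs_nonneg _)) (hφ1 _)
        · rw [hφI _ h]; simp
    _ = _ := (Finset.sum_filter _ _).symm

lemma sum_split_bound {n ι κ : Type*} [Fintype n] [Fintype ι] [Fintype κ]
    (A : Finset n) (a b : n → ℝ) (c N : ℝ) (hc : 0 ≤ c)
    (P : ι → κ → Prop) [∀ u v, Decidable (P u v)] (w : κ → n → ℝ)
    (ha : ∀ k ∈ A, |a k| ≤ c * ∑ u : ι, ∑ v : κ, if P u v then |w v k| else 0)
    (hcount : ∑ u : ι, ∑ v : κ, (if P u v then (1:ℝ) else 0) ≤ N)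
    (hCS : ∀ v : κ, ∑ k, |w v k| * |b k| ≤ 1) :
    ∑ k ∈ A, |a k| * |b k| ≤ c * N := by
  calc ∑ k ∈ A, |a k| * |b k|
      ≤ ∑ k ∈ A, (c * ∑ u : ι, ∑ v : κ, if P u v then |w v k| else 0) * |b k| :=
        Finset.sum_le_sum fun k hk => mul_le_mul_of_nonneg_right (ha k hk) (abs_nonneg _)
    _ = c * ∑ k ∈ A, ∑ u : ι, ∑ v : κ, (if P u v then |w v k| * |b k| else 0) := by
        rw [Finset.mul_sum]
        refine Finset.sum_congr rfl fun k _ => ?_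
        rw [mul_assoc]
        congr 1
        rw [Finset.sum_mul]
        refine Finset.sum_congr rfl fun u _ => ?_
        rw [Finset.sum_mul]
        refine Finset.sum_congr rfl fun v _ => ?_
        rw [ite_mul, zero_mul]
    _ = c * ∑ u : ι, ∑ v : κ, ∑ k ∈ A, (if P u v then |w v k| * |b k| else 0) := by
        congr 1
        rw [Finset.sum_comm]
        exact Finset.sum_congr rfl fun u _ => Finset.sum_comm

    _ ≤ c * ∑ u : ι, ∑ v : κ, (if P u v then (1:ℝ) else 0) := by
        refine mul_le_mul_of_nonneg_left ?_ hc
        refine Finset.sum_le_sum fun u _ => Finset.sum_le_sum fun v _ => ?_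
        split_ifs with h
        · refine le_trans (Finset.sum_le_sum_of_subset_of_nonneg (Finset.subset_univ A)
            fun k _ _ => mul_nonneg (abs_nonneg _) (abs_nonneg _)) (hCS v)
        · simp [h]
    _ ≤ c * N := mul_le_mul_of_nonneg_left hcount hc

lemma count_bound {Z : Type*} [DecidableEq Z] (G : SimpleGraph Z) [DecidableRel G.Adj]
    [∀ v : Z, Fintype (G.neighborSet v)]
    (hfin : ∀ (x : Z) (r : ℕ), {y : Z | G.dist x y ≤ r}.Finite)
    {Cd : ℝ} (hCd : 1 ≤ Cd) (d : ℕ) {L : ℕ}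
    (x0 : Z) (Λ : Finset Z)
    (hball : ((zball G hfin x0 L).card : ℝ) ≤ Cd * (L:ℝ) ^ d)
    (hdeg : ∀ v : Z, (G.degree v : ℝ) ≤ Cd) :
    ∑ u : ↥(zball G hfin x0 L), ∑ v : ↥Λ,
      (if G.Adj (u:Z) (v:Z) ∧ (v:Z) ∉ zball G hfin x0 L then (1:ℝ) else 0)
      ≤ Cd ^ 2 * (L:ℝ) ^ d := by
  classical
  have hinner : ∀ u : ↥(zball G hfin x0 L),
      ∑ v : ↥Λ, (if G.Adj (u:Z) (v:Z) ∧ (v:Z) ∉ zball G hfin x0 L then (1:ℝ) else 0) ≤ Cd := by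
    intro u
    have h1 : ∑ v : ↥Λ, (if G.Adj (u:Z) (v:Z) ∧ (v:Z) ∉ zball G hfin x0 L then (1:ℝ) else 0)
        ≤ ∑ v : ↥Λ, (if G.Adj (u:Z) (v:Z) then (1:ℝ) else 0) := by
      refine Finset.sum_le_sum fun v _ => ?_
      by_cases h : G.Adj (u:Z) (v:Z) ∧ (v:Z) ∉ zball G hfin x0 L
      · rw [if_pos h, if_pos h.1]
      · rw [if_neg h]; split_ifs <;> norm_num
    refine le_trans h1 ?_
    have h2 : ∑ v : ↥Λ, (if G.Adj (u:Z) (v:Z) then (1:ℝ) else 0)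
        = ((Λ.filter (fun z => G.Adj (u:Z) z)).card : ℝ) := by
      rw [coe_sum_eq Λ _ (fun z => if G.Adj (u:Z) z then (1:ℝ) else 0) (fun v => rfl)]
      rw [Finset.sum_boole]
    rw [h2]
    refine le_trans ?_ (hdeg (u:Z))
    have h3 : (Λ.filter (fun z => G.Adj (u:Z) z)) ⊆ G.neighborFinset (u:Z) := by
      intro z hz
      rw [SimpleGraph.mem_neighborFinset]
      exact (Finset.mem_filter.1 hz).2
    exact_mod_cast Nat.cast_le.2 (Finset.card_le_card h3)
  calc ∑ u : ↥(zball G hfin x0 L), ∑ v : ↥Λ,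
        (if G.Adj (u:Z) (v:Z) ∧ (v:Z) ∉ zball G hfin x0 L then (1:ℝ) else 0)
      ≤ ∑ _u : ↥(zball G hfin x0 L), Cd := Finset.sum_le_sum fun u _ => hinner u
    _ = ((zball G hfin x0 L).card : ℝ) * Cd := by
        rw [Finset.sum_const, Finset.card_univ, Fintype.card_coe, nsmul_eq_mul]
    _ ≤ (Cd * (L:ℝ)^d) * Cd := mul_le_mul_of_nonneg_right hball (le_trans zero_le_one hCd)
    _ = Cd ^ 2 * (L:ℝ)^d := by ring

/-- The key deterministic decay estimate: if `B_L(x0)` is `(E,m)`-nonsingular and `ψ` is an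
eigenfunction of `H_Λ` with eigenvalue `E`, then `|ψ(x0)|` is controlled by the values of `ψ`
on the outer boundary of the ball, with a factor `exp(-mL)/(Cd² L^d)`. -/
lemma eig_decay {Z : Type*} [DecidableEq Z] (G : SimpleGraph Z) [DecidableRel G.Adj]
    [∀ v : Z, Fintype (G.neighborSet v)] (hconn : G.Connected)
    (hfin : ∀ (x : Z) (r : ℕ), {y : Z | G.dist x y ≤ r}.Finite)
    (Vf : Z → ℝ) {Cd : ℝ} (hCd : 1 ≤ Cd) (d : ℕ) {L : ℕ} (hL : 1 ≤ L)
    {m : ℝ} (hm : 0 < m)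
    (x0 : Z) (Λ : Finset Z) (hsub : zball G hfin x0 L ⊆ Λ) (hx : x0 ∈ Λ)
    (E : ℝ) (hNS : IsNS G hfin Vf Cd d (3/2) (1/8) (1/6) x0 L E m)
    (ψ : ↥Λ → ℝ) (hψ : Ham G Vf Λ *ᵥ ψ = E • ψ) :
    |ψ ⟨x0, hx⟩| ≤ Real.exp (-(m*(L:ℝ))) / (Cd^2 * (L:ℝ)^d) *
      ∑ u : ↥(zball G hfin x0 L), ∑ v : ↥Λ,
        if G.Adj (u:Z) (v:Z) ∧ (v:Z) ∉ zball G hfin x0 L then |ψ v| else 0 := by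
  classical
  set B := zball G hfin x0 L with hB
  have hxB : x0 ∈ B := self_mem_zball G hfin x0 L
  set M : Matrix ↥B ↥B ℝ := Ham G Vf B with hMdef
  set K : Matrix ↥B ↥B ℝ := M - E • 1 with hKdef
  have hdet : IsUnit K.det := by
    have h1 := hNS.1
    simp only [specSet, Set.mem_setOf_eq, hB] at h1
    exact isUnit_iff_ne_zero.2 h1
  have hgreenK : green M E = K⁻¹ := by rw [hKdef]; rfl
  set Ψ : Z → ℝ := fun z => if h : z ∈ Λ then ψ ⟨z, h⟩ else 0 with hΨdef
  have hΨv : ∀ v : ↥Λ, ψ v = Ψ (v : Z) := by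
    intro v
    simp only [hΨdef, v.2, dif_pos]
  -- the eigenvalue equation, written as a sum over `Λ`
  have e1 : ∀ (w : ↥Λ),
      ((G.degree (w:Z) : ℝ) + Vf (w:Z)) * Ψ (w:Z)
        - ∑ z ∈ Λ, (if G.Adj (w:Z) z then (1:ℝ) else 0) * Ψ z = E * Ψ (w:Z) := by
    intro w
    have h0 := congrFun hψ w
    simp only [Matrix.mulVec, dotProduct, Pi.smul_apply, smul_eq_mul] at h0
    have h1 : ∑ v : ↥Λ, Ham G Vf Λ w v * ψ v
        = ∑ z ∈ Λ, ((if (w:Z) = z then (G.degree (w:Z) : ℝ) + Vf (w:Z) else 0)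
            - (if G.Adj (w:Z) z then (1:ℝ) else 0)) * Ψ z := by
      refine coe_sum_eq Λ _ _ fun v => ?_
      rw [hΨv v]; rfl
    rw [h1, ham_row_sum, if_pos w.2] at h0
    rw [← hΨv w] at h0 ⊢
    linarith [h0]
  set f : ↥B → ℝ := fun u => Ψ (u : Z) with hfdef
  set g : ↥B → ℝ := fun u => ∑ z ∈ Λ \ B, (if G.Adj (u:Z) z then (1:ℝ) else 0) * Ψ z with hgdef
  have hKf : K *ᵥ f = g := by
    funext w
    have h1 : (K *ᵥ f) w = ∑ z ∈ B, ((if (w:Z) = z then ((G.degree (w:Z) : ℝ) + Vf (w:Z) - E) else 0)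
        - (if G.Adj (w:Z) z then (1:ℝ) else 0)) * Ψ z := by
      simp only [Matrix.mulVec, dotProduct]
      refine coe_sum_eq B _ _ fun u => ?_
      simp only [hKdef, hMdef, Matrix.sub_apply, Matrix.smul_apply, Matrix.one_apply,
        smul_eq_mul, mul_ite, mul_one, mul_zero, Ham, hfdef]
      simp only [Subtype.ext_iff]
      split_ifs with h <;> ring
    rw [h1, ham_row_sum, if_pos w.2]
    have e1w := e1 ⟨(w:Z), hsub w.2⟩
    have hsd : ∑ z ∈ Λ \ B, (if G.Adj (w:Z) z then (1:ℝ) else 0) * Ψ z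
        + ∑ z ∈ B, (if G.Adj (w:Z) z then (1:ℝ) else 0) * Ψ z
        = ∑ z ∈ Λ, (if G.Adj (w:Z) z then (1:ℝ) else 0) * Ψ z := Finset.sum_sdiff hsub
    simp only [hgdef]
    linarith [e1w, hsd]
  have hf : f = K⁻¹ *ᵥ g := by
    have h0 : K⁻¹ *ᵥ (K *ᵥ f) = K⁻¹ *ᵥ g := by rw [hKf]
    rw [Matrix.mulVec_mulVec] at h0
    rw [Matrix.nonsing_inv_mul K hdet] at h0
    rwa [Matrix.one_mulVec] at h0
  set x' : ↥B := ⟨x0, hxB⟩ with hx'def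
  have hψx : ψ ⟨x0, hx⟩ = f x' := by rw [hΨv ⟨x0, hx⟩]
  set c : ℝ := Real.exp (-(m*(L:ℝ))) / (Cd^2 * (L:ℝ)^d) with hcdef
  have hL0 : (0:ℝ) < (L:ℝ) := by exact_mod_cast Nat.lt_of_lt_of_le Nat.zero_lt_one hL
  have hCL : (0:ℝ) < Cd^2 * (L:ℝ)^d := by positivity
  have hc0 : 0 ≤ c := by positivity
  -- the Green-function bound on relevant entries
  have hgreen : ∀ u : ↥B, (∃ z ∈ Λ \ B, G.Adj (u:Z) z) → |K⁻¹ x' u| ≤ c := by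
    rintro u ⟨z, hz, hadj⟩
    have hzB : z ∉ B := (Finset.mem_sdiff.1 hz).2
    have hdz : L < G.dist x0 z := by
      by_contra hcon
      exact hzB ((mem_zball_iff G hfin x0 z L).2 (le_of_not_gt hcon))
    have hd1 : G.dist (u:Z) z = 1 := SimpleGraph.dist_eq_one_iff_adj.2 hadj
    have htri : G.dist x0 z ≤ G.dist x0 (u:Z) + G.dist (u:Z) z := hconn.dist_triangle
    have hdu : L ≤ G.dist x0 (u:Z) := by omega
    have hexp : (L:ℝ) ^ ((1 + (1/6 : ℝ)) / (3/2 : ℝ)) ≤ (G.dist x0 (u:Z) : ℝ) := by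
      have h1 : (L:ℝ) ^ ((1 + (1/6 : ℝ)) / (3/2 : ℝ)) ≤ (L:ℝ) ^ (1:ℝ) :=
        Real.rpow_le_rpow_of_exponent_le (by exact_mod_cast hL) (by norm_num)
      rw [Real.rpow_one] at h1
      exact le_trans h1 (by exact_mod_cast hdu)
    have h2 := hNS.2 x' u hexp
    rw [hgreenK] at h2
    have hdu' : (L:ℝ) ≤ (G.dist x0 (u:Z) : ℝ) := by exact_mod_cast hdu
    have ht0 : (0:ℝ) ≤ (L:ℝ) ^ (-(1/8 : ℝ)) := Real.rpow_nonneg hL0.le _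
    have h3 : Real.exp (-(m * (1 + (L:ℝ) ^ (-(1/8:ℝ)))) * (G.dist x0 (u:Z) : ℝ))
        ≤ Real.exp (-(m*(L:ℝ))) := by
      apply Real.exp_le_exp.2
      have hdnn : (0:ℝ) ≤ (G.dist x0 (u:Z) : ℝ) := Nat.cast_nonneg _
      nlinarith [mul_nonneg hm.le (sub_nonneg.2 hdu'), mul_nonneg (mul_nonneg hm.le ht0) hdnn]
    have h4 : Cd^2 * (L:ℝ)^d * |K⁻¹ x' u| ≤ Real.exp (-(m*(L:ℝ))) := le_trans h2 h3
    rw [hcdef, le_div_iff₀ hCL]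
    linarith [h4]
  -- converting the double sum
  have hgsum : ∀ (u : ↥B) (h : Z → ℝ),
      (∑ v : ↥Λ, if G.Adj (u:Z) (v:Z) ∧ (v:Z) ∉ B then h (v:Z) else 0)
        = ∑ z ∈ Λ \ B, (if G.Adj (u:Z) z then h z else 0) := by
    intro u h
    rw [coe_sum_eq Λ _ (fun z => if G.Adj (u:Z) z ∧ z ∉ B then h z else 0) (fun v => rfl)]
    rw [← Finset.sum_subset (Finset.sdiff_subset (s := Λ) (t := B))]
    · refine Finset.sum_congr rfl fun z hz => ?_
      have hzB : z ∉ B := (Finset.mem_sdiff.1 hz).2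
      by_cases ha : G.Adj (u:Z) z
      · rw [if_pos ⟨ha, hzB⟩, if_pos ha]
      · rw [if_neg (fun hc => ha hc.1), if_neg ha]
    · intro z hzΛ hznd
      have hzB : z ∈ B := by
        by_contra hc
        exact hznd (Finset.mem_sdiff.2 ⟨hzΛ, hc⟩)
      rw [if_neg (fun hc => hc.2 hzB)]
  -- main estimate
  have hterm : ∀ u : ↥B, |K⁻¹ x' u * g u|
      ≤ c * ∑ v : ↥Λ, (if G.Adj (u:Z) (v:Z) ∧ (v:Z) ∉ B then |ψ v| else 0) := by
    intro u
    have hrhs0 : (0:ℝ) ≤ ∑ v : ↥Λ, (if G.Adj (u:Z) (v:Z) ∧ (v:Z) ∉ B then |ψ v| else 0) :=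
      Finset.sum_nonneg fun v _ => by split_ifs <;> simp [abs_nonneg]
    by_cases hex : ∃ z ∈ Λ \ B, G.Adj (u:Z) z
    · have hgu : |g u| ≤ ∑ v : ↥Λ, (if G.Adj (u:Z) (v:Z) ∧ (v:Z) ∉ B then |ψ v| else 0) := by
        have h1 : |g u| ≤ ∑ z ∈ Λ \ B, |(if G.Adj (u:Z) z then (1:ℝ) else 0) * Ψ z| :=
          Finset.abs_sum_le_sum_abs _ _
        have h2 : ∑ z ∈ Λ \ B, |(if G.Adj (u:Z) z then (1:ℝ) else 0) * Ψ z|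
            = ∑ z ∈ Λ \ B, (if G.Adj (u:Z) z then |Ψ z| else 0) := by
          refine Finset.sum_congr rfl fun z _ => ?_
          split_ifs <;> simp
        have h3 : (∑ v : ↥Λ, if G.Adj (u:Z) (v:Z) ∧ (v:Z) ∉ B then |ψ v| else 0)
            = ∑ z ∈ Λ \ B, (if G.Adj (u:Z) z then |Ψ z| else 0) := by
          rw [← hgsum u (fun z => |Ψ z|)]
          refine Finset.sum_congr rfl fun v _ => ?_
          rw [hΨv v]
        rw [h3]
        rw [h2] at h1
        exact h1
      calc |K⁻¹ x' u * g u| = |K⁻¹ x' u| * |g u| := abs_mul _ _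
        _ ≤ c * |g u| := mul_le_mul_of_nonneg_right (hgreen u hex) (abs_nonneg _)
        _ ≤ c * ∑ v : ↥Λ, (if G.Adj (u:Z) (v:Z) ∧ (v:Z) ∉ B then |ψ v| else 0) :=
            mul_le_mul_of_nonneg_left hgu hc0
    · have hgu : g u = 0 := by
        refine Finset.sum_eq_zero fun z hz => ?_
        rw [if_neg (fun hc => hex ⟨z, hz, hc⟩), zero_mul]
      rw [hgu, mul_zero, abs_zero]
      exact mul_nonneg hc0 hrhs0
  calc |ψ ⟨x0, hx⟩| = |∑ u : ↥B, K⁻¹ x' u * g u| := by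
        rw [hψx, hf]; rfl
    _ ≤ ∑ u : ↥B, |K⁻¹ x' u * g u| := Finset.abs_sum_le_sum_abs _ _
    _ ≤ ∑ u : ↥B, c * ∑ v : ↥Λ, (if G.Adj (u:Z) (v:Z) ∧ (v:Z) ∉ B then |ψ v| else 0) :=
        Finset.sum_le_sum fun u _ => hterm u
    _ = c * ∑ u : ↥B, ∑ v : ↥Λ, (if G.Adj (u:Z) (v:Z) ∧ (v:Z) ∉ B then |ψ v| else 0) :=
        (Finset.mul_sum _ _ _).symm

theorem statement11 {Z : Type*} [DecidableEq Z] (G : SimpleGraph Z) [DecidableRel G.Adj]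
    [∀ v : Z, Fintype (G.neighborSet v)]
    (hconn : G.Connected) (hcount : Countable Z)
    (hfin : ∀ (x : Z) (r : ℕ), {y : Z | G.dist x y ≤ r}.Finite)
    (d : ℕ) (hd : 1 ≤ d) (Cd : ℝ) (hCd : 1 ≤ Cd)
    (hball : ∀ (x : Z) (r : ℕ), 1 ≤ r → ((zball G hfin x r).card : ℝ) ≤ Cd * (r : ℝ) ^ d)
    (hdeg : ∀ v : Z, (G.degree v : ℝ) ≤ Cd)
    {Ω : Type*} [MeasurableSpace Ω] (Pr : Measure Ω) [IsProbabilityMeasure Pr]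
    (V : Z → Ω → ℝ)
    (L : ℕ) (hL : 1 ≤ L) (m : ℝ) (hm : 0 < m) (I : Set ℝ) (ζ : ℝ) (hζ : 0 < ζ)
    -- variable-energy two-volume bound: for every pair of disjoint balls, the probability
    -- that for some `E ∈ I` both balls are `(E,m)`-singular is at most `ζ(L)`
    (hprob : ∀ x y : Z, Disjoint (zball G hfin x L) (zball G hfin y L) →
      Pr {ω | ∃ E ∈ I,
          ¬ IsNS G hfin (fun z => V z ω) Cd d (3/2) (1/8) (1/6) x L E m ∧
          ¬ IsNS G hfin (fun z => V z ω) Cd d (3/2) (1/8) (1/6) y L E m} ≤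
        ENNReal.ofReal ζ)
    (x y : Z) (hxy : 2 * L + 1 < G.dist x y)
    -- a finite connected subgraph `𝒢 ⊇ B_L(x) ∪ B_L(y)`
    (Λ : Finset Z) (hconnΛ : (G.induce (↑Λ : Set Z)).Connected)
    (hcontain : zball G hfin x L ∪ zball G hfin y L ⊆ Λ)
    (hxΛ : x ∈ Λ) (hyΛ : y ∈ Λ)
    -- a Borel function with `|φ| ≤ 1` supported in `I`
    (φ : ℝ → ℂ) (hφmeas : Measurable φ) (hφ1 : ∀ t : ℝ, ‖φ t‖ ≤ 1)
    (hφI : ∀ t : ℝ, t ∉ I → φ t = 0) :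
    ∫⁻ ω, ENNReal.ofReal
        ‖matFun (Ham G (fun z => V z ω) Λ) (Ham_isHermitian G (fun z => V z ω) Λ) φ
          ⟨x, hxΛ⟩ ⟨y, hyΛ⟩‖ ∂Pr ≤
      ENNReal.ofReal (4 * Real.exp (-(m * (L : ℝ))) + ζ) := by
  classical
  have hxsub : zball G hfin x L ⊆ Λ := fun z hz => hcontain (Finset.mem_union_left _ hz)
  have hysub : zball G hfin y L ⊆ Λ := fun z hz => hcontain (Finset.mem_union_right _ hz)
  have hdisj : Disjoint (zball G hfin x L) (zball G hfin y L) := by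
    rw [Finset.disjoint_left]
    intro z hzx hzy
    have h1 : G.dist x z ≤ L := (mem_zball_iff G hfin x z L).1 hzx
    have h2 : G.dist y z ≤ L := (mem_zball_iff G hfin y z L).1 hzy
    have h3 : G.dist x y ≤ G.dist x z + G.dist z y := hconn.dist_triangle
    have h4 : G.dist z y = G.dist y z := SimpleGraph.dist_comm
    omega
  set S := {ω : Ω | ∃ E ∈ I,
      ¬ IsNS G hfin (fun z => V z ω) Cd d (3/2) (1/8) (1/6) x L E m ∧
      ¬ IsNS G hfin (fun z => V z ω) Cd d (3/2) (1/8) (1/6) y L E m} with hSdef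
  have hPrS : Pr S ≤ ENNReal.ofReal ζ := hprob x y hdisj
  have hcx := count_bound G hfin hCd d x Λ (hball x L hL) hdeg
  have hcy := count_bound G hfin hCd d y Λ (hball y L hL) hdeg
  set c : ℝ := Real.exp (-(m*(L:ℝ))) / (Cd^2 * (L:ℝ)^d) with hcdef
  have hL0 : (0:ℝ) < (L:ℝ) := by exact_mod_cast Nat.lt_of_lt_of_le Nat.zero_lt_one hL
  have hCL : (0:ℝ) < Cd^2 * (L:ℝ)^d := by positivity
  have hcN : c * (Cd^2 * (L:ℝ)^d) = Real.exp (-(m*(L:ℝ))) := div_mul_cancel₀ _ (ne_of_gt hCL)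
  have hc0 : 0 ≤ c := by positivity
  have hbad : ∀ ω : Ω, ‖matFun (Ham G (fun z => V z ω) Λ)
      (Ham_isHermitian G (fun z => V z ω) Λ) φ ⟨x, hxΛ⟩ ⟨y, hyΛ⟩‖ ≤ 1 := by
    intro ω
    refine le_trans (matFun_bound _ φ I hφ1 hφI _ _) ?_
    refine le_trans (Finset.sum_le_sum_of_subset_of_nonneg (Finset.filter_subset _ _)
      (fun k _ _ => mul_nonneg (abs_nonneg _) (abs_nonneg _))) ?_
    exact corr_le_one _ _ _
  have hgood : ∀ ω : Ω, ω ∉ S → ‖matFun (Ham G (fun z => V z ω) Λ)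
      (Ham_isHermitian G (fun z => V z ω) Λ) φ ⟨x, hxΛ⟩ ⟨y, hyΛ⟩‖
      ≤ 2 * Real.exp (-(m*(L:ℝ))) := by
    intro ω hω
    set hH := Ham_isHermitian G (fun z => V z ω) Λ with hHdef
    set b := hH.eigenvectorBasis with hbdef
    set lam := hH.eigenvalues with hlamdef
    have hNSor : ∀ E ∈ I, IsNS G hfin (fun z => V z ω) Cd d (3/2) (1/8) (1/6) x L E m ∨
        IsNS G hfin (fun z => V z ω) Cd d (3/2) (1/8) (1/6) y L E m := by
      intro E hE
      by_contra hc2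
      push_neg at hc2
      exact hω ⟨E, hE, hc2.1, hc2.2⟩
    set J := Finset.univ.filter (fun k => lam k ∈ I) with hJdef
    have hdecx : ∀ k, IsNS G hfin (fun z => V z ω) Cd d (3/2) (1/8) (1/6) x L (lam k) m →
        |b k ⟨x, hxΛ⟩| ≤ c * ∑ u : ↥(zball G hfin x L), ∑ v : ↥Λ,
          if G.Adj (u:Z) (v:Z) ∧ (v:Z) ∉ zball G hfin x L then |b k v| else 0 :=
      fun k hk => eig_decay G hconn hfin (fun z => V z ω) hCd d hL hm x Λ hxsub hxΛ
        (lam k) hk _ (hH.mulVec_eigenvectorBasis k)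
    have hdecy : ∀ k, IsNS G hfin (fun z => V z ω) Cd d (3/2) (1/8) (1/6) y L (lam k) m →
        |b k ⟨y, hyΛ⟩| ≤ c * ∑ u : ↥(zball G hfin y L), ∑ v : ↥Λ,
          if G.Adj (u:Z) (v:Z) ∧ (v:Z) ∉ zball G hfin y L then |b k v| else 0 :=
      fun k hk => eig_decay G hconn hfin (fun z => V z ω) hCd d hL hm y Λ hysub hyΛ
        (lam k) hk _ (hH.mulVec_eigenvectorBasis k)
    have hx1 : ∑ k ∈ J.filter
          (fun k => IsNS G hfin (fun z => V z ω) Cd d (3/2) (1/8) (1/6) x L (lam k) m),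
        |b k ⟨x, hxΛ⟩| * |b k ⟨y, hyΛ⟩| ≤ c * (Cd^2 * (L:ℝ)^d) :=
      sum_split_bound _ (fun k => b k ⟨x, hxΛ⟩) (fun k => b k ⟨y, hyΛ⟩) c _ hc0
        (fun (u : ↥(zball G hfin x L)) (v : ↥Λ) => G.Adj (u:Z) (v:Z) ∧ (v:Z) ∉ zball G hfin x L)
        (fun v k => b k v)
        (fun k hk => hdecx k (Finset.mem_filter.1 hk).2)
        hcx
        (fun v => corr_le_one hH v ⟨y, hyΛ⟩)
    have hy1 : ∑ k ∈ J.filter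
          (fun k => ¬ IsNS G hfin (fun z => V z ω) Cd d (3/2) (1/8) (1/6) x L (lam k) m),
        |b k ⟨x, hxΛ⟩| * |b k ⟨y, hyΛ⟩| ≤ c * (Cd^2 * (L:ℝ)^d) := by
      have heq : ∑ k ∈ J.filter
            (fun k => ¬ IsNS G hfin (fun z => V z ω) Cd d (3/2) (1/8) (1/6) x L (lam k) m),
          |b k ⟨x, hxΛ⟩| * |b k ⟨y, hyΛ⟩|
          = ∑ k ∈ J.filter
            (fun k => ¬ IsNS G hfin (fun z => V z ω) Cd d (3/2) (1/8) (1/6) x L (lam k) m),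
          |b k ⟨y, hyΛ⟩| * |b k ⟨x, hxΛ⟩| :=
        Finset.sum_congr rfl fun k _ => mul_comm _ _
      rw [heq]
      refine sum_split_bound _ (fun k => b k ⟨y, hyΛ⟩) (fun k => b k ⟨x, hxΛ⟩) c _ hc0
        (fun (u : ↥(zball G hfin y L)) (v : ↥Λ) => G.Adj (u:Z) (v:Z) ∧ (v:Z) ∉ zball G hfin y L)
        (fun v k => b k v) ?_ hcy (fun v => corr_le_one hH v ⟨x, hxΛ⟩)
      intro k hk
      rcases Finset.mem_filter.1 hk with ⟨hkJ, hknx⟩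
      have hkI : lam k ∈ I := (Finset.mem_filter.1 hkJ).2
      exact hdecy k ((hNSor _ hkI).resolve_left hknx)
    calc ‖matFun (Ham G (fun z => V z ω) Λ) hH φ ⟨x, hxΛ⟩ ⟨y, hyΛ⟩‖
        ≤ ∑ k ∈ J, |b k ⟨x, hxΛ⟩| * |b k ⟨y, hyΛ⟩| := matFun_bound hH φ I hφ1 hφI _ _
      _ = _ + _ := (Finset.sum_filter_add_sum_filter_not J
            (fun k => IsNS G hfin (fun z => V z ω) Cd d (3/2) (1/8) (1/6) x L (lam k) m)
            (fun k => |b k ⟨x, hxΛ⟩| * |b k ⟨y, hyΛ⟩|)).symm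
      _ ≤ c * (Cd^2 * (L:ℝ)^d) + c * (Cd^2 * (L:ℝ)^d) := add_le_add hx1 hy1
      _ = 2 * Real.exp (-(m*(L:ℝ))) := by rw [hcN]; ring
  have hpt : ∀ ω : Ω, ENNReal.ofReal ‖matFun (Ham G (fun z => V z ω) Λ)
      (Ham_isHermitian G (fun z => V z ω) Λ) φ ⟨x, hxΛ⟩ ⟨y, hyΛ⟩‖
      ≤ ENNReal.ofReal (2 * Real.exp (-(m*(L:ℝ)))) + S.indicator (fun _ => (1:ENNReal)) ω := by
    intro ω
    by_cases hω : ω ∈ S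
    · rw [Set.indicator_of_mem hω]
      calc ENNReal.ofReal ‖matFun (Ham G (fun z => V z ω) Λ)
            (Ham_isHermitian G (fun z => V z ω) Λ) φ ⟨x, hxΛ⟩ ⟨y, hyΛ⟩‖
          ≤ ENNReal.ofReal 1 := ENNReal.ofReal_le_ofReal (hbad ω)
        _ = 1 := ENNReal.ofReal_one
        _ ≤ _ := le_add_self
    · rw [Set.indicator_of_notMem hω, add_zero]
      exact ENNReal.ofReal_le_ofReal (hgood ω hω)
  calc ∫⁻ ω, ENNReal.ofReal
        ‖matFun (Ham G (fun z => V z ω) Λ) (Ham_isHermitian G (fun z => V z ω) Λ) φ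
          ⟨x, hxΛ⟩ ⟨y, hyΛ⟩‖ ∂Pr
      ≤ ∫⁻ ω, (ENNReal.ofReal (2 * Real.exp (-(m*(L:ℝ))))
          + S.indicator (fun _ => (1:ENNReal)) ω) ∂Pr := lintegral_mono hpt
    _ = ENNReal.ofReal (2 * Real.exp (-(m*(L:ℝ)))) * Pr Set.univ
        + ∫⁻ ω, S.indicator (fun _ => (1:ENNReal)) ω ∂Pr := by
        rw [lintegral_add_left measurable_const, lintegral_const]
    _ ≤ ENNReal.ofReal (2 * Real.exp (-(m*(L:ℝ)))) + ENNReal.ofReal ζ := by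
        rw [measure_univ, mul_one]
        refine add_le_add le_rfl ?_
        refine le_trans (lintegral_indicator_const_le S 1) ?_
        rw [one_mul]
        exact hPrS
    _ ≤ ENNReal.ofReal (4 * Real.exp (-(m * (L : ℝ))) + ζ) := by
        rw [← ENNReal.ofReal_add (by positivity) hζ.le]
        refine ENNReal.ofReal_le_ofReal ?_
        have := Real.exp_pos (-(m*(L:ℝ)))
        linarith
end

section
/- Fix the parameters α = 4/3, δ = 1/4, σ = 1/3 (so σ > δ and σ(α−1) = 1/9), E ∈ ℝ, m > 0, and let L_{j+1} = ⌈L_j^α⌉. There exists L* (depending only on d, C_d and these parameters) such that the following holds whenever L_j ≥ L*. Let B_{L_{j+1}}(u) be a ball and suppose ℙ(B_{L_j}(x) is (E,m)-S) ≤ exp(−L_j^δ) for every ball B_{L_j}(x) ⊆ B_{L_{j+1}}(u). Let 𝒩(ω) be the maximal cardinality of a collection of pairwise disjoint (E,m)-singular balls B_{L_j}(x_i) ⊆ B_{L_{j+1}}(u). Then ℙ(𝒩 ≥ L_j^{σ(α−1)}) ≤ (1/2)·exp(−L_{j+1}^{δ}). -/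
/-!
Statement 12: probabilistic bound on the number of disjoint singular balls
(Lemma `prob.Poisson` in the paper), with parameters `α = 4/3`, `δ = 1/4`, `σ = 1/3`
(so `σ(α-1) = 1/9`), `τ = 1/8`, `ϱ = 1/3`.
-/

open Finset

open MeasureTheory


set_option maxHeartbeats 1000000 in
lemma statement12_aux (d : ℕ) (Cd : ℝ) (hCd : 1 ≤ Cd) (x : ℝ) (Lj1 n : ℕ) (N : ℝ)
    (hx3 : 3 ≤ x)
    (hK : (Real.log Cd + 72 * d + 3) ^ (36:ℕ) ≤ x)
    (hLj143 : (Lj1:ℝ) ≤ 2 * x ^ ((4:ℝ)/3)) (hLj1R1 : 1 ≤ (Lj1:ℝ))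
    (hn : x ^ ((1:ℝ)/9) ≤ (n:ℝ))
    (hN0 : 0 ≤ N) (hNa : N ≤ Cd * (Lj1:ℝ) ^ d) :
    N ^ n * Real.exp (-x ^ ((1:ℝ)/4)) ^ n ≤ (1/2) * Real.exp (-(Lj1:ℝ) ^ ((1:ℝ)/4)) := by
  obtain ⟨K, hKdef⟩ : ∃ K : ℝ, K = Real.log Cd + 72 * d + 3 := ⟨_, rfl⟩
  rw [← hKdef] at hK
  have hlogCd : 0 ≤ Real.log Cd := Real.log_nonneg hCd
  have hd0 : (0:ℝ) ≤ (d:ℝ) := Nat.cast_nonneg d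
  have hK3 : (3:ℝ) ≤ K := by rw [hKdef]; linarith
  have hx1 : (1:ℝ) ≤ x := by linarith
  have hx0 : (0:ℝ) < x := by linarith
  have hxK : K ≤ x ^ ((1:ℝ)/36) := by
    have h1 : K ^ (36:ℕ) ≤ (x ^ ((1:ℝ)/36)) ^ (36:ℕ) := by
      rw [← Real.rpow_natCast (x ^ ((1:ℝ)/36)) 36, ← Real.rpow_mul hx0.le,
        show ((1:ℝ)/36) * ((36:ℕ):ℝ) = 1 by norm_num, Real.rpow_one]
      exact hK
    exact le_of_pow_le_pow_left₀ (by norm_num) (Real.rpow_nonneg hx0.le _) h1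
  have hx36one : (1:ℝ) ≤ x ^ ((1:ℝ)/36) := by
    have := Real.rpow_le_rpow_of_exponent_le hx1 (show (0:ℝ) ≤ (1:ℝ)/36 by norm_num)
    rwa [Real.rpow_zero] at this
  have hxsq : x ^ (2:ℝ) = x * x := by
    rw [show (2:ℝ) = 1 + 1 by norm_num, Real.rpow_add hx0, Real.rpow_one]
  have hx2mul : x ^ ((2:ℝ)/3) * x ^ ((4:ℝ)/3) = x ^ (2:ℝ) := by
    rw [← Real.rpow_add hx0]; norm_num
  have h23 : (2:ℝ) ≤ x ^ ((2:ℝ)/3) := by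
    have h1 : (2:ℝ) ^ (3:ℕ) ≤ (x ^ ((2:ℝ)/3)) ^ (3:ℕ) := by
      rw [← Real.rpow_natCast (x ^ ((2:ℝ)/3)) 3, ← Real.rpow_mul hx0.le,
        show ((2:ℝ)/3) * ((3:ℕ):ℝ) = 2 by norm_num]
      have h9 : (3:ℝ) * 3 ≤ x * x := mul_le_mul hx3 hx3 (by norm_num) (by linarith)
      have h8 : (2:ℝ) ^ (3:ℕ) = 8 := by norm_num
      rw [h8, hxsq]
      linarith
    exact le_of_pow_le_pow_left₀ (by norm_num) (Real.rpow_nonneg hx0.le _) h1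
  have hLj1x2 : (Lj1 : ℝ) ≤ x ^ (2:ℝ) := by
    have h2 := mul_le_mul_of_nonneg_right h23 (Real.rpow_nonneg hx0.le ((4:ℝ)/3))
    linarith
  have hlogx36 : Real.log x ≤ 36 * x ^ ((1:ℝ)/36) := by
    have h1 : Real.log (x ^ ((1:ℝ)/36)) = (1/36) * Real.log x := Real.log_rpow hx0 _
    have h2 : Real.log (x ^ ((1:ℝ)/36)) ≤ x ^ ((1:ℝ)/36) - 1 :=
      Real.log_le_sub_one_of_pos (Real.rpow_pos_of_pos hx0 _)
    linarith [Real.rpow_nonneg hx0.le ((1:ℝ)/36)]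
  have hlogLj1 : Real.log (Lj1:ℝ) ≤ 2 * Real.log x := by
    have h1 : Real.log (Lj1:ℝ) ≤ Real.log (x ^ (2:ℝ)) :=
      Real.log_le_log (by linarith) hLj1x2
    rwa [Real.log_rpow hx0] at h1
  obtain ⟨a, hadef⟩ : ∃ a : ℝ, a = Cd * (Lj1:ℝ) ^ d := ⟨_, rfl⟩
  rw [← hadef] at hNa
  have hLjd1 : (1:ℝ) ≤ (Lj1:ℝ) ^ d := one_le_pow₀ hLj1R1
  have ha1 : (1:ℝ) ≤ a := by rw [hadef]; nlinarith [hCd, hLjd1]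
  have ha0 : (0:ℝ) < a := by linarith
  have hloga : Real.log a ≤ (K - 3) * x ^ ((1:ℝ)/36) := by
    have h1 : Real.log a = Real.log Cd + (d:ℝ) * Real.log (Lj1:ℝ) := by
      rw [hadef, Real.log_mul (by linarith) (by positivity), Real.log_pow]
    have hKm3 : K - 3 = Real.log Cd + 72 * d := by rw [hKdef]; ring
    rw [h1, hKm3]
    linarith [mul_le_mul_of_nonneg_left hlogLj1 hd0,
      mul_le_mul_of_nonneg_left hlogx36 hd0,
      mul_le_mul_of_nonneg_left hx36one hlogCd]
  have hy : ((Lj1:ℝ)) ^ ((1:ℝ)/4) ≤ 2 * x ^ ((1:ℝ)/3) := by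
    have h1 : ((Lj1:ℝ)) ^ ((1:ℝ)/4) ≤ (2 * x ^ ((4:ℝ)/3)) ^ ((1:ℝ)/4) :=
      Real.rpow_le_rpow (by linarith) hLj143 (by norm_num)
    have h2 : (2 * x ^ ((4:ℝ)/3)) ^ ((1:ℝ)/4)
        = (2:ℝ) ^ ((1:ℝ)/4) * x ^ ((1:ℝ)/3) := by
      rw [Real.mul_rpow (by norm_num) (Real.rpow_nonneg hx0.le _),
        ← Real.rpow_mul hx0.le]
      norm_num
    have h3 : (2:ℝ) ^ ((1:ℝ)/4) ≤ 2 := by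
      have := Real.rpow_le_rpow_of_exponent_le (show (1:ℝ) ≤ 2 by norm_num)
        (show (1:ℝ)/4 ≤ 1 by norm_num)
      rwa [Real.rpow_one] at this
    have h4 : (0:ℝ) ≤ x ^ ((1:ℝ)/3) := Real.rpow_nonneg hx0.le _
    have h5 := mul_le_mul_of_nonneg_right h3 h4
    linarith
  have hkey : Real.log 2 + (Lj1:ℝ) ^ ((1:ℝ)/4) ≤ (n:ℝ) * (x ^ ((1:ℝ)/4) - Real.log a) := by
    have p1 : x ^ ((1:ℝ)/9) * x ^ ((1:ℝ)/4) = x ^ ((13:ℝ)/36) := by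
      rw [← Real.rpow_add hx0]; norm_num
    have p2 : x ^ ((1:ℝ)/9) * x ^ ((1:ℝ)/36) = x ^ ((5:ℝ)/36) := by
      rw [← Real.rpow_add hx0]; norm_num
    have p3 : x ^ ((1:ℝ)/36) * x ^ ((12:ℝ)/36) = x ^ ((13:ℝ)/36) := by
      rw [← Real.rpow_add hx0]; norm_num
    have p4 : x ^ ((1:ℝ)/36) * x ^ ((1:ℝ)/36) = x ^ ((1:ℝ)/18) := by
      rw [← Real.rpow_add hx0]; norm_num
    have q1 : x ^ ((5:ℝ)/36) ≤ x ^ ((12:ℝ)/36) :=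
      Real.rpow_le_rpow_of_exponent_le hx1 (by norm_num)
    have q2 : x ^ ((1:ℝ)/18) ≤ x ^ ((1:ℝ)/4) :=
      Real.rpow_le_rpow_of_exponent_le hx1 (by norm_num)
    have q3 : (1:ℝ) ≤ x ^ ((12:ℝ)/36) := by
      have := Real.rpow_le_rpow_of_exponent_le hx1 (show (0:ℝ) ≤ (12:ℝ)/36 by norm_num)
      rwa [Real.rpow_zero] at this
    have q4 : x ^ ((1:ℝ)/3) = x ^ ((12:ℝ)/36) := by norm_num
    have hlog2 : Real.log 2 ≤ 1 := by
      have := Real.log_le_sub_one_of_pos (show (0:ℝ) < 2 by norm_num)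
      linarith
    have h19nn : (0:ℝ) ≤ x ^ ((1:ℝ)/9) := Real.rpow_nonneg hx0.le _
    have h136nn : (0:ℝ) ≤ x ^ ((1:ℝ)/36) := Real.rpow_nonneg hx0.le _
    have h12nn : (0:ℝ) ≤ x ^ ((12:ℝ)/36) := Real.rpow_nonneg hx0.le _
    have hbr : 0 ≤ x ^ ((1:ℝ)/4) - Real.log a := by
      have h6 := mul_le_mul_of_nonneg_right hxK h136nn
      have h7 := mul_le_mul_of_nonneg_right (show K - 3 ≤ K by linarith) h136nn
      linarith [hloga, p4, q2]
    have step1 : x ^ ((1:ℝ)/9) * (x ^ ((1:ℝ)/4) - Real.log a)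
        ≤ (n:ℝ) * (x ^ ((1:ℝ)/4) - Real.log a) :=
      mul_le_mul_of_nonneg_right hn hbr
    have step2 : x ^ ((13:ℝ)/36) - (K - 3) * x ^ ((5:ℝ)/36)
        ≤ x ^ ((1:ℝ)/9) * (x ^ ((1:ℝ)/4) - Real.log a) := by
      have h8 : x ^ ((1:ℝ)/9) * Real.log a ≤ (K - 3) * x ^ ((5:ℝ)/36) := by
        calc x ^ ((1:ℝ)/9) * Real.log a
            ≤ x ^ ((1:ℝ)/9) * ((K - 3) * x ^ ((1:ℝ)/36)) :=
              mul_le_mul_of_nonneg_left hloga h19nn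
          _ = (K - 3) * (x ^ ((1:ℝ)/9) * x ^ ((1:ℝ)/36)) := by ring
          _ = (K - 3) * x ^ ((5:ℝ)/36) := by rw [p2]
      linarith [p1, h8]
    have step3 : Real.log 2 + (Lj1:ℝ) ^ ((1:ℝ)/4)
        ≤ x ^ ((13:ℝ)/36) - (K - 3) * x ^ ((5:ℝ)/36) := by
      rw [q4] at hy
      have hKx : K * x ^ ((12:ℝ)/36) ≤ x ^ ((13:ℝ)/36) := by
        calc K * x ^ ((12:ℝ)/36) ≤ x ^ ((1:ℝ)/36) * x ^ ((12:ℝ)/36) :=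
              mul_le_mul_of_nonneg_right hxK h12nn
          _ = x ^ ((13:ℝ)/36) := p3
      linarith [mul_le_mul_of_nonneg_left q1 (show (0:ℝ) ≤ K - 3 by linarith)]
    linarith
  have hstep : N ^ n * Real.exp (-x ^ ((1:ℝ)/4)) ^ n
      ≤ (a * Real.exp (-x ^ ((1:ℝ)/4))) ^ n := by
    rw [← mul_pow]
    exact pow_le_pow_left₀ (by positivity)
      (mul_le_mul_of_nonneg_right hNa (Real.exp_nonneg _)) n
  have hexp : (a * Real.exp (-x ^ ((1:ℝ)/4))) ^ n
      = Real.exp ((n:ℝ) * (Real.log a - x ^ ((1:ℝ)/4))) := by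
    rw [show a * Real.exp (-x ^ ((1:ℝ)/4)) = Real.exp (Real.log a - x ^ ((1:ℝ)/4)) by
        rw [Real.exp_sub, Real.exp_log ha0, Real.exp_neg]; exact (div_eq_mul_inv _ _).symm,
      Real.exp_nat_mul]
  have hfin2 : Real.exp ((n:ℝ) * (Real.log a - x ^ ((1:ℝ)/4)))
      ≤ (1 / 2) * Real.exp (-(Lj1:ℝ) ^ ((1:ℝ)/4)) := by
    have h1 : (n:ℝ) * (Real.log a - x ^ ((1:ℝ)/4))
        ≤ -(Real.log 2 + (Lj1:ℝ) ^ ((1:ℝ)/4)) := by linarith [hkey]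
    calc Real.exp ((n:ℝ) * (Real.log a - x ^ ((1:ℝ)/4)))
        ≤ Real.exp (-(Real.log 2 + (Lj1:ℝ) ^ ((1:ℝ)/4))) := Real.exp_le_exp.mpr h1
      _ = (1 / 2) * Real.exp (-(Lj1:ℝ) ^ ((1:ℝ)/4)) := by
          rw [neg_add, Real.exp_add, Real.exp_neg, Real.exp_log (by norm_num : (0:ℝ) < 2)]
          norm_num
  calc N ^ n * Real.exp (-x ^ ((1:ℝ)/4)) ^ n
      ≤ (a * Real.exp (-x ^ ((1:ℝ)/4))) ^ n := hstep
    _ ≤ (1 / 2) * Real.exp (-(Lj1:ℝ) ^ ((1:ℝ)/4)) := by rw [hexp]; exact hfin2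

theorem statement12 (d : ℕ) (hd : 1 ≤ d) (Cd : ℝ) (hCd : 1 ≤ Cd) :
    ∃ Lstar : ℕ,
      ∀ (Z : Type) [DecidableEq Z] (G : SimpleGraph Z) [DecidableRel G.Adj]
        [∀ v : Z, Fintype (G.neighborSet v)],
      G.Connected → Countable Z →
      ∀ (hfin : ∀ (x : Z) (r : ℕ), {y : Z | G.dist x y ≤ r}.Finite),
      (∀ (x : Z) (r : ℕ), 1 ≤ r → ((zball G hfin x r).card : ℝ) ≤ Cd * (r : ℝ) ^ d) →
      ∀ (Ω : Type) [MeasurableSpace Ω] (Pr : Measure Ω) [IsProbabilityMeasure Pr]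
        (V : Z → Ω → ℝ) (E m : ℝ), 0 < m →
      ∀ (u : Z) (Lj Lj1 : ℕ), Lstar ≤ Lj → Lj1 = ⌈(Lj : ℝ) ^ ((4 : ℝ) / 3)⌉₊ →
      -- the events `{B_{L_j}(x) is (E,m)-S}` are independent for pairwise disjoint balls
      (∀ T : Finset Z,
        ((T : Set Z).Pairwise fun x y => Disjoint (zball G hfin x Lj) (zball G hfin y Lj)) →
        Pr (⋂ x ∈ (T : Set Z),
            {ω | ¬ IsNS G hfin (fun z => V z ω) Cd d (4/3) (1/8) (1/3) x Lj E m}) =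
          ∏ x ∈ T,
            Pr {ω | ¬ IsNS G hfin (fun z => V z ω) Cd d (4/3) (1/8) (1/3) x Lj E m}) →
      -- each ball `B_{L_j}(x) ⊆ B_{L_{j+1}}(u)` is `(E,m)`-singular with probability
      -- at most `exp(-L_j^δ)`
      (∀ x : Z, zball G hfin x Lj ⊆ zball G hfin u Lj1 →
        Pr {ω | ¬ IsNS G hfin (fun z => V z ω) Cd d (4/3) (1/8) (1/3) x Lj E m} ≤
          ENNReal.ofReal (Real.exp (-(Lj : ℝ) ^ ((1 : ℝ) / 4)))) →
      -- conclusion: `Pr(𝒩 ≥ L_j^{σ(α-1)}) ≤ (1/2) exp(-L_{j+1}^δ)`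
      Pr {ω | ∃ T : Finset Z,
          ((Lj : ℝ) ^ ((1 : ℝ) / 9) ≤ (T.card : ℝ)) ∧
          (∀ x ∈ T, zball G hfin x Lj ⊆ zball G hfin u Lj1 ∧
            ¬ IsNS G hfin (fun z => V z ω) Cd d (4/3) (1/8) (1/3) x Lj E m) ∧
          ((T : Set Z).Pairwise fun x y =>
            Disjoint (zball G hfin x Lj) (zball G hfin y Lj))} ≤
        ENNReal.ofReal ((1 / 2) * Real.exp (-(Lj1 : ℝ) ^ ((1 : ℝ) / 4))) := by
  classical
  refine ⟨max 3 ⌈(Real.log Cd + 72 * d + 3) ^ (36:ℕ)⌉₊, ?_⟩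
  intro Z _ G _ _ _hconn _hcount hfin hcard Ω _ Pr _ V E m _hm u Lj Lj1 hLj hLj1 hindep hsing
  have hLj3 : (3:ℕ) ≤ Lj := le_trans (le_max_left _ _) hLj
  have hx3 : (3:ℝ) ≤ (Lj:ℝ) := by exact_mod_cast hLj3
  have hx0 : (0:ℝ) < (Lj:ℝ) := by linarith
  have hK36x : (Real.log Cd + 72 * d + 3) ^ (36:ℕ) ≤ (Lj:ℝ) := by
    have hceil : ⌈(Real.log Cd + 72 * d + 3) ^ (36:ℕ)⌉₊ ≤ Lj := le_trans (le_max_right _ _) hLj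
    calc (Real.log Cd + 72 * d + 3) ^ (36:ℕ)
        ≤ (⌈(Real.log Cd + 72 * d + 3) ^ (36:ℕ)⌉₊ : ℝ) := Nat.le_ceil _
      _ ≤ (Lj:ℝ) := by exact_mod_cast hceil
  have hLj143 : (Lj1 : ℝ) ≤ 2 * (Lj:ℝ) ^ ((4:ℝ)/3) := by
    have h43 : (1:ℝ) ≤ (Lj:ℝ) ^ ((4:ℝ)/3) := by
      have := Real.rpow_le_rpow_of_exponent_le (show (1:ℝ) ≤ (Lj:ℝ) by linarith)
        (show (0:ℝ) ≤ (4:ℝ)/3 by norm_num)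
      rwa [Real.rpow_zero] at this
    have := Nat.ceil_lt_add_one (Real.rpow_nonneg hx0.le ((4:ℝ)/3))
    rw [hLj1]
    linarith
  have hLj1pos : 1 ≤ Lj1 := by
    rw [hLj1]
    exact Nat.one_le_ceil_iff.mpr (Real.rpow_pos_of_pos hx0 _)
  have hLj1R1 : (1:ℝ) ≤ (Lj1:ℝ) := by exact_mod_cast hLj1pos
  set n : ℕ := ⌈(Lj:ℝ) ^ ((1:ℝ)/9)⌉₊ with hndef
  have hn : (Lj:ℝ) ^ ((1:ℝ)/9) ≤ (n:ℝ) := Nat.le_ceil _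
  set Sing : Z → Set Ω := fun w =>
    {ω | ¬ IsNS G hfin (fun z => V z ω) Cd d (4/3) (1/8) (1/3) w Lj E m} with hSdef
  set B : Finset Z := zball G hfin u Lj1 with hBdef
  set 𝒯 : Finset (Finset Z) := (B.powersetCard n).filter (fun T =>
      ((T : Set Z).Pairwise fun p q => Disjoint (zball G hfin p Lj) (zball G hfin q Lj)) ∧
      ∀ w ∈ T, zball G hfin w Lj ⊆ B) with hTdef
  have hsub : {ω | ∃ T : Finset Z,
      ((Lj : ℝ) ^ ((1 : ℝ) / 9) ≤ (T.card : ℝ)) ∧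
      (∀ w ∈ T, zball G hfin w Lj ⊆ zball G hfin u Lj1 ∧
        ¬ IsNS G hfin (fun z => V z ω) Cd d (4/3) (1/8) (1/3) w Lj E m) ∧
      ((T : Set Z).Pairwise fun p q =>
        Disjoint (zball G hfin p Lj) (zball G hfin q Lj))}
      ⊆ ⋃ T ∈ 𝒯, ⋂ w ∈ (T : Set Z), Sing w := by
    intro ω hω
    obtain ⟨T0, hc0, hprop, hpair⟩ := hω
    have hn0 : n ≤ T0.card := Nat.ceil_le.mpr hc0
    obtain ⟨T, hTsub, hTcard⟩ := Finset.exists_subset_card_eq hn0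
    have hmem : T ∈ 𝒯 := by
      rw [hTdef, Finset.mem_filter, Finset.mem_powersetCard]
      refine ⟨⟨fun w hw => ?_, hTcard⟩,
        hpair.mono (Finset.coe_subset.mpr hTsub),
        fun w hw => (hprop w (hTsub hw)).1⟩
      exact (hprop w (hTsub hw)).1 (self_mem_zball G hfin w Lj)
    refine Set.mem_iUnion₂.mpr ⟨T, hmem, ?_⟩
    refine Set.mem_iInter₂.mpr fun w hw => ?_
    exact (hprop w (hTsub hw)).2
  set c : ENNReal := ENNReal.ofReal (Real.exp (-(Lj:ℝ) ^ ((1:ℝ)/4))) with hcdef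
  have hPT : ∀ T ∈ 𝒯, Pr (⋂ w ∈ (T : Set Z), Sing w) ≤ c ^ n := by
    intro T hT
    rw [hTdef, Finset.mem_filter, Finset.mem_powersetCard] at hT
    obtain ⟨⟨_hTB, hTcard⟩, hTpair, hTballs⟩ := hT
    rw [hSdef, hindep T hTpair]
    calc ∏ w ∈ T, Pr {ω | ¬ IsNS G hfin (fun z => V z ω) Cd d (4/3) (1/8) (1/3) w Lj E m}
        ≤ ∏ _w ∈ T, c := Finset.prod_le_prod' fun w hw => hsing w (hTballs w hw)
      _ = c ^ n := by rw [Finset.prod_const, hTcard]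
  have hcount : (𝒯.card : ENNReal) ≤ ((B.card ^ n : ℕ) : ENNReal) := by
    have h1 : 𝒯.card ≤ (B.powersetCard n).card := Finset.card_filter_le _ _
    have h2 : (B.powersetCard n).card = B.card.choose n := Finset.card_powersetCard _ _
    have h3 : B.card.choose n ≤ B.card ^ n := Nat.choose_le_pow _ _
    exact_mod_cast le_trans h1 (by rw [h2]; exact h3)
  have hNa : (B.card : ℝ) ≤ Cd * (Lj1:ℝ) ^ d := by
    rw [hBdef]
    exact hcard u Lj1 hLj1pos
  calc Pr _ ≤ Pr (⋃ T ∈ 𝒯, ⋂ w ∈ (T : Set Z), Sing w) := measure_mono hsub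
    _ ≤ ∑ T ∈ 𝒯, Pr (⋂ w ∈ (T : Set Z), Sing w) := measure_biUnion_finset_le 𝒯 _
    _ ≤ ∑ _T ∈ 𝒯, c ^ n := Finset.sum_le_sum hPT
    _ = (𝒯.card : ENNReal) * c ^ n := by rw [Finset.sum_const, nsmul_eq_mul]
    _ ≤ ((B.card ^ n : ℕ) : ENNReal) * c ^ n := by gcongr
    _ = ENNReal.ofReal ((B.card : ℝ) ^ n * Real.exp (-(Lj:ℝ) ^ ((1:ℝ)/4)) ^ n) := by
        rw [ENNReal.ofReal_mul (by positivity), ENNReal.ofReal_pow (Real.exp_nonneg _),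
          ← hcdef, ← ENNReal.ofReal_natCast (B.card ^ n)]
        congr 2
        push_cast
        ring
    _ ≤ ENNReal.ofReal ((1 / 2) * Real.exp (-(Lj1 : ℝ) ^ ((1 : ℝ) / 4))) := by
        apply ENNReal.ofReal_le_ofReal
        exact statement12_aux d Cd hCd (Lj:ℝ) Lj1 n (B.card : ℝ) hx3 hK36x hLj143 hLj1R1 hn
          (by positivity) hNa
end
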